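/- arXiv:1907.09826 — 4 statements merged into one kernel-verified Lean document; each statement's English description precedes it below -/
import Mathlib

section
/- Let F be a strongly convex Minkowski norm on ℝ^m. Then the map v ↦ D(F²)(v) (the Fréchet derivative of F², extended by the value 0 at v = 0) is Lipschitz continuous from ℝ^m to the dual space (ℝ^m)^*. -/
open scoped Topology Classical
open MeasureTheory
noncomputable section

/-- One half of the second Fréchet derivative of `F²` at `v`, evaluated on `(w₁, w₂)`:
the fundamental tensor of `F`. -/
def fundTensor {V : Type*} [NormedAddCommGroup V] [NormedSpace ℝ V]
    (F : V → ℝ) (v w₁ w₂ : V) : ℝ :=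
  (1 / 2) * fderiv ℝ (fderiv ℝ (fun u => (F u) ^ 2)) v w₁ w₂

/-- A strongly convex Minkowski norm on a real normed space. -/
structure IsMinkowskiNorm {V : Type*} [NormedAddCommGroup V] [NormedSpace ℝ V]
    (F : V → ℝ) : Prop where
  continuous : Continuous F
  map_zero : F 0 = 0
  pos : ∀ v : V, v ≠ 0 → 0 < F v
  homog : ∀ lam : ℝ, 0 < lam → ∀ v : V, F (lam • v) = lam * F v
  smooth : ContDiffOn ℝ 2 F {0}ᶜ
  symm : ∀ v : V, v ≠ 0 → ∀ w₁ w₂ : V, fundTensor F v w₁ w₂ = fundTensor F v w₂ w₁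
  posdef : ∀ v : V, v ≠ 0 → ∀ w : V, w ≠ 0 → 0 < fundTensor F v w w

/-- The Legendre map of `F`: `ℓ(v) = (1/2) D(F²)(v)` for `v ≠ 0`, and `ℓ(0) = 0`. -/
def legendre {V : Type*} [NormedAddCommGroup V] [NormedSpace ℝ V]
    (F : V → ℝ) (v : V) : V →L[ℝ] ℝ :=
  if v = 0 then 0 else (1 / 2 : ℝ) • fderiv ℝ (fun u => (F u) ^ 2) v

/-- The dual co-Finsler norm `F^*(ω) = sup {ω v : F v = 1}`. -/
def dualNorm {V : Type*} [NormedAddCommGroup V] [NormedSpace ℝ V]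
    (F : V → ℝ) (ω : V →L[ℝ] ℝ) : ℝ :=
  sSup ((fun v => ω v) '' {v | F v = 1})

set_option maxHeartbeats 1000000 in
private lemma minkowski_aux {m : ℕ} (F : EuclideanSpace ℝ (Fin m) → ℝ)
    (hF : IsMinkowskiNorm F) :
    ∃ K : NNReal, LipschitzWith K
      (fun v : EuclideanSpace ℝ (Fin m) =>
        if v = 0 then (0 : EuclideanSpace ℝ (Fin m) →L[ℝ] ℝ)
        else fderiv ℝ (fun u => (F u) ^ 2) v) := by
  classical
  -- E := EuclideanSpace ℝ (Fin m)
  set f : EuclideanSpace ℝ (Fin m) → ℝ := fun u => (F u) ^ 2 with hfdef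
  set g : EuclideanSpace ℝ (Fin m) → (EuclideanSpace ℝ (Fin m) →L[ℝ] ℝ) := fun v => fderiv ℝ f v with hgdef
  have hopen : IsOpen ({0}ᶜ : Set (EuclideanSpace ℝ (Fin m))) := isOpen_compl_singleton
  have hf2 : ContDiffOn ℝ 2 f {0}ᶜ := hF.smooth.pow 2
  have hdf : ∀ v : EuclideanSpace ℝ (Fin m), v ≠ 0 → DifferentiableAt ℝ f v := fun v hv =>
    ((hf2.contDiffAt (hopen.mem_nhds hv)).differentiableAt (by norm_num))
  have hg1 : ContDiffOn ℝ 1 g {0}ᶜ :=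
    hf2.fderiv_of_isOpen (m := 1) hopen (le_refl 2)
  have hdg : ∀ v : EuclideanSpace ℝ (Fin m), v ≠ 0 → DifferentiableAt ℝ g v := fun v hv =>
    ((hg1.contDiffAt (hopen.mem_nhds hv)).differentiableAt (by norm_num))
  have hggcont : ContinuousOn (fun v => fderiv ℝ g v) {0}ᶜ :=
    (hg1.fderiv_of_isOpen (m := 0) hopen (by norm_num)).continuousOn
  -- homogeneity of f
  have hfc : ∀ c : ℝ, 0 < c → ∀ v : EuclideanSpace ℝ (Fin m), f (c • v) = c ^ 2 * f v := by
    intro c hc v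
    simp only [hfdef]
    rw [hF.homog c hc v]
    ring
  -- homogeneity of g
  have hg_homog : ∀ c : ℝ, 0 < c → ∀ v : EuclideanSpace ℝ (Fin m), v ≠ 0 → g (c • v) = c • g v := by
    intro c hc v hv
    have hcv : c • v ≠ 0 := smul_ne_zero (ne_of_gt hc) hv
    have h1 : HasFDerivAt (fun u : EuclideanSpace ℝ (Fin m) => f (c • u)) (c • g (c • v)) v := by
      have hcomp := (hdf _ hcv).hasFDerivAt.comp v
        ((hasFDerivAt_id v).const_smul c)
      refine hcomp.congr_fderiv ?_
      ext w
      simp [hgdef, ContinuousLinearMap.smul_apply, ContinuousLinearMap.map_smul]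
    have h2 : HasFDerivAt (fun u : EuclideanSpace ℝ (Fin m) => c ^ 2 * f u) ((c ^ 2) • g v) v :=
      (hdf v hv).hasFDerivAt.const_mul (c ^ 2)
    have heq : (fun u : EuclideanSpace ℝ (Fin m) => f (c • u)) = fun u : EuclideanSpace ℝ (Fin m) => c ^ 2 * f u :=
      funext fun u => hfc c hc u
    rw [heq] at h1
    have h12 := h1.unique h2
    have h3 : c • g (c • v) = c • (c • g v) := by
      rw [h12, smul_smul, ← pow_two]
    exact smul_right_injective _ (ne_of_gt hc) h3
  -- 0-homogeneity of fderiv g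
  have hgg_homog : ∀ c : ℝ, 0 < c → ∀ v : EuclideanSpace ℝ (Fin m), v ≠ 0 →
      fderiv ℝ g (c • v) = fderiv ℝ g v := by
    intro c hc v hv
    have hcv : c • v ≠ 0 := smul_ne_zero (ne_of_gt hc) hv
    have h1 : HasFDerivAt (fun u : EuclideanSpace ℝ (Fin m) => g (c • u)) (c • fderiv ℝ g (c • v)) v := by
      have hcomp := (hdg _ hcv).hasFDerivAt.comp v
        ((hasFDerivAt_id v).const_smul c)
      refine hcomp.congr_fderiv ?_
      ext w
      simp [ContinuousLinearMap.smul_apply, ContinuousLinearMap.map_smul]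
    have heq : (fun u : EuclideanSpace ℝ (Fin m) => c • g u) =ᶠ[𝓝 v] (fun u : EuclideanSpace ℝ (Fin m) => g (c • u)) := by
      filter_upwards [hopen.mem_nhds hv] with u hu
      exact (hg_homog c hc u hu).symm
    have h1' : HasFDerivAt (fun u : EuclideanSpace ℝ (Fin m) => c • g u) (c • fderiv ℝ g (c • v)) v :=
      h1.congr_of_eventuallyEq heq
    have h2 : HasFDerivAt (fun u : EuclideanSpace ℝ (Fin m) => c • g u) (c • fderiv ℝ g v) v :=
      (hdg v hv).hasFDerivAt.const_smul c
    exact smul_right_injective _ (ne_of_gt hc) (h1'.unique h2)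
  -- bound on the second derivative
  obtain ⟨C0, hC0⟩ := (isCompact_sphere (0 : EuclideanSpace ℝ (Fin m)) 1).exists_bound_of_continuousOn (f := fun v => fderiv ℝ g v)
    (show ContinuousOn (fun v => fderiv ℝ g v) (Metric.sphere (0 : EuclideanSpace ℝ (Fin m)) 1) from hggcont.mono (fun x (hx : x ∈ Metric.sphere (0 : EuclideanSpace ℝ (Fin m)) 1) => by
      simp only [Set.mem_compl_iff, Set.mem_singleton_iff]
      intro h
      rw [mem_sphere_iff_norm, h] at hx
      simp at hx))
  set C : ℝ := max C0 0 with hCdef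
  have hC_nonneg : 0 ≤ C := le_max_right _ _
  have hbound : ∀ v : EuclideanSpace ℝ (Fin m), v ≠ 0 → ‖fderiv ℝ g v‖ ≤ C := by
    intro v hv
    have hnv : (0 : ℝ) < ‖v‖ := norm_pos_iff.mpr hv
    set u : EuclideanSpace ℝ (Fin m) := ‖v‖⁻¹ • v with hu
    have hu_sphere : u ∈ Metric.sphere (0 : EuclideanSpace ℝ (Fin m)) 1 := by
      simp [hu, norm_smul, abs_of_pos (inv_pos.mpr hnv), inv_mul_cancel₀ (ne_of_gt hnv)]
    have hu_ne : u ≠ 0 := by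
      intro h
      rw [h] at hu_sphere
      simp at hu_sphere
    have hvu : v = ‖v‖ • u := by
      rw [hu, smul_smul, mul_inv_cancel₀ (ne_of_gt hnv), one_smul]
    calc ‖fderiv ℝ g v‖ = ‖fderiv ℝ g u‖ := by rw [hvu, hgg_homog ‖v‖ hnv u hu_ne]
      _ ≤ C0 := hC0 u hu_sphere
      _ ≤ C := le_max_left _ _
  -- mean value inequality on segments avoiding 0
  have hseg : ∀ v w : EuclideanSpace ℝ (Fin m), (0 : EuclideanSpace ℝ (Fin m)) ∉ segment ℝ v w →
      ‖g w - g v‖ ≤ C * ‖w - v‖ := by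
    intro v w h0
    have hsub : segment ℝ v w ⊆ {0}ᶜ := fun x hx hx0 => by
      simp only [Set.mem_singleton_iff] at hx0
      exact h0 (hx0 ▸ hx)
    exact (convex_segment v w).norm_image_sub_le_of_norm_fderiv_le
      (fun x hx => hdg x (hsub hx)) (fun x hx => hbound x (hsub hx))
      (left_mem_segment ℝ v w) (right_mem_segment ℝ v w)
  -- linear bound on g
  have hlin : ∀ v : EuclideanSpace ℝ (Fin m), v ≠ 0 → ‖g v‖ ≤ C * ‖v‖ := by
    intro v hv
    have h0 : (0 : EuclideanSpace ℝ (Fin m)) ∉ segment ℝ v ((2 : ℝ) • v) := by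
      rintro ⟨a, b, ha, hb, hab, hx⟩
      have hxx : a • v + b • (2 : ℝ) • v = (a + 2 * b) • v := by
        rw [smul_smul, add_smul]; ring_nf
      rw [hxx] at hx
      have hab' : (0 : ℝ) < a + 2 * b := by nlinarith
      exact hv (by simpa [ne_of_gt hab'] using smul_eq_zero.mp hx)
    have hmv := hseg v ((2 : ℝ) • v) h0
    rw [hg_homog 2 two_pos v hv] at hmv
    have e1 : (2 : ℝ) • g v - g v = g v := by
      rw [two_smul]; abel
    have e2 : (2 : ℝ) • v - v = v := by
      rw [two_smul]; abel
    rwa [e1, e2] at hmv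
  -- conclusion
  refine ⟨C.toNNReal, LipschitzWith.of_dist_le_mul fun v w => ?_⟩
  rw [Real.coe_toNNReal C hC_nonneg, dist_eq_norm, dist_eq_norm]
  by_cases hv : v = 0
  · subst hv
    by_cases hw : w = 0
    · subst hw
      simp
    · rw [if_pos rfl, if_neg hw, zero_sub, norm_neg]
      calc ‖g w‖ ≤ C * ‖w‖ := hlin w hw
        _ = C * ‖(0 : EuclideanSpace ℝ (Fin m)) - w‖ := by rw [zero_sub, norm_neg]
  · by_cases hw : w = 0
    · subst hw
      rw [if_neg hv, if_pos rfl, sub_zero]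
      calc ‖g v‖ ≤ C * ‖v‖ := hlin v hv
        _ = C * ‖v - (0 : EuclideanSpace ℝ (Fin m))‖ := by rw [sub_zero]
    · rw [if_neg hv, if_neg hw]
      by_cases h0 : (0 : EuclideanSpace ℝ (Fin m)) ∈ segment ℝ v w
      · have hdist : dist v 0 + dist 0 w = dist v w := dist_add_dist_of_mem_segment h0
        simp only [dist_eq_norm, sub_zero, zero_sub, norm_neg] at hdist
        calc ‖g v - g w‖ ≤ ‖g v‖ + ‖g w‖ := norm_sub_le _ _
          _ ≤ C * ‖v‖ + C * ‖w‖ := add_le_add (hlin v hv) (hlin w hw)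
          _ = C * (‖v‖ + ‖w‖) := by ring
          _ = C * ‖v - w‖ := by rw [hdist]
      · exact hseg w v (by rwa [segment_symm])

/-- For a strongly convex Minkowski norm `F` on `ℝ^m`, the map
`v ↦ D(F²)(v)` (extended by `0` at `v = 0`) is Lipschitz from `ℝ^m` to the dual space. -/
theorem fderiv_sq_minkowski_lipschitz
    {m : ℕ} (hm : 2 ≤ m) (F : EuclideanSpace ℝ (Fin m) → ℝ)
    (hF : IsMinkowskiNorm F) :
    ∃ K : NNReal, LipschitzWith K
      (fun v : EuclideanSpace ℝ (Fin m) =>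
        if v = 0 then (0 : EuclideanSpace ℝ (Fin m) →L[ℝ] ℝ)
        else fderiv ℝ (fun u => (F u) ^ 2) v) :=
  minkowski_aux F hF
end
end

section
/- Let F be a strongly convex Minkowski norm on ℝ^m and let ℓ be its Legendre map. Then there exists a constant c > 0 such that for all v₁, v₂ ∈ ℝ^m one has (ℓ(v₂) − ℓ(v₁))[v₂ − v₁] ≥ c‖v₂ − v₁‖² (strong monotonicity of the Legendre map, including the degenerate case in which the segment from v₁ to v₂ passes through the origin). -/
open scoped Topology Classical
open MeasureTheory
noncomputable section

section Aux

variable {V : Type*} [NormedAddCommGroup V] [NormedSpace ℝ V] {F : V → ℝ}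

lemma MK.sq_homog (hF : IsMinkowskiNorm F) {lam : ℝ} (hlam : 0 < lam) (v : V) :
    F (lam • v) ^ 2 = lam ^ 2 * F v ^ 2 := by
  rw [hF.homog lam hlam]; ring

lemma MK.contDiffAt_sq (hF : IsMinkowskiNorm F) {v : V} (hv : v ≠ 0) :
    ContDiffAt ℝ 2 (fun u => (F u) ^ 2) v :=
  ((hF.smooth.pow 2).contDiffAt (by
    exact (isOpen_compl_singleton).mem_nhds (by simpa using hv)))

lemma MK.diffAt_sq (hF : IsMinkowskiNorm F) {v : V} (hv : v ≠ 0) :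
    DifferentiableAt ℝ (fun u => (F u) ^ 2) v :=
  (MK.contDiffAt_sq hF hv).differentiableAt (by norm_num)

lemma MK.contDiffAt_T (hF : IsMinkowskiNorm F) {v : V} (hv : v ≠ 0) :
    ContDiffAt ℝ 1 (fderiv ℝ (fun u => (F u) ^ 2)) v :=
  (MK.contDiffAt_sq hF hv).fderiv_right (m := 1) (by norm_num)

lemma MK.diffAt_T (hF : IsMinkowskiNorm F) {v : V} (hv : v ≠ 0) :
    DifferentiableAt ℝ (fderiv ℝ (fun u => (F u) ^ 2)) v :=
  (MK.contDiffAt_T hF hv).differentiableAt one_ne_zero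

lemma MK.continuousAt_DT (hF : IsMinkowskiNorm F) {v : V} (hv : v ≠ 0) :
    ContinuousAt (fderiv ℝ (fderiv ℝ (fun u => (F u) ^ 2))) v :=
  ((MK.contDiffAt_T hF hv).fderiv_right (m := 0) (by norm_num)).continuousAt

/-- positive 1-homogeneity of the derivative of `F²`. -/
lemma MK.fderiv_homog (hF : IsMinkowskiNorm F) {lam : ℝ} (hlam : 0 < lam)
    {v : V} (hv : v ≠ 0) :
    fderiv ℝ (fun u => (F u) ^ 2) (lam • v) = lam • fderiv ℝ (fun u => (F u) ^ 2) v := by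
  set f : V → ℝ := fun u => (F u) ^ 2 with hf
  have hlv : lam • v ≠ 0 := smul_ne_zero hlam.ne' hv
  have hsm : HasFDerivAt (fun u : V => lam • u) (lam • ContinuousLinearMap.id ℝ V) v :=
    (hasFDerivAt_id v).const_smul lam
  have h1 : HasFDerivAt (fun u : V => f (lam • u))
      ((fderiv ℝ f (lam • v)).comp (lam • ContinuousLinearMap.id ℝ V)) v :=
    (MK.diffAt_sq hF hlv).hasFDerivAt.comp v hsm
  have h2 : HasFDerivAt (fun u : V => lam ^ 2 * f u)
      (lam ^ 2 • fderiv ℝ f v) v := (MK.diffAt_sq hF hv).hasFDerivAt.const_mul (lam ^ 2)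
  have hfun : (fun u : V => f (lam • u)) = fun u : V => lam ^ 2 * f u := by
    funext u; exact MK.sq_homog hF hlam u
  rw [hfun] at h1
  have heq := h2.unique h1
  have hcomp : (fderiv ℝ f (lam • v)).comp (lam • ContinuousLinearMap.id ℝ V)
      = lam • fderiv ℝ f (lam • v) := by
    ext w; simp [ContinuousLinearMap.smul_apply, mul_comm]
  rw [hcomp] at heq
  have : lam • (lam • fderiv ℝ f v) = lam • fderiv ℝ f (lam • v) := by
    rw [← heq, smul_smul]; ring_nf
  have := smul_right_injective (V →L[ℝ] ℝ) hlam.ne' this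
  rw [← this]

/-- Euler's identity. -/
lemma MK.euler (hF : IsMinkowskiNorm F) {v : V} (hv : v ≠ 0) :
    fderiv ℝ (fun u => (F u) ^ 2) v v = 2 * (F v) ^ 2 := by
  set f : V → ℝ := fun u => (F u) ^ 2 with hf
  have hsm : HasDerivAt (fun t : ℝ => t • v) v 1 := by
    simpa using (hasDerivAt_id (1:ℝ)).smul_const v
  have hf' : HasFDerivAt f (fderiv ℝ f v) ((1:ℝ) • v) := by
    rw [one_smul]; exact (MK.diffAt_sq hF hv).hasFDerivAt
  have h1 : HasDerivAt (fun t : ℝ => f (t • v)) (fderiv ℝ f v v) 1 := by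
    have := hf'.comp_hasDerivAt 1 hsm; exact this
  have h2 : HasDerivAt (fun t : ℝ => t ^ 2 * (F v) ^ 2) (2 * (F v) ^ 2) 1 := by
    simpa using (hasDerivAt_pow 2 (1:ℝ)).mul_const ((F v) ^ 2)
  have hev : (fun t : ℝ => f (t • v)) =ᶠ[𝓝 (1:ℝ)] fun t => t ^ 2 * (F v) ^ 2 := by
    filter_upwards [Ioi_mem_nhds (zero_lt_one)] with t ht
    exact MK.sq_homog hF ht v
  exact ((h2.congr_of_eventuallyEq hev).unique h1).symm

set_option maxHeartbeats 1000000 in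
/-- 0-homogeneity of the second derivative of `F²`. -/
lemma MK.DT_homog (hF : IsMinkowskiNorm F) {lam : ℝ} (hlam : 0 < lam)
    {v : V} (hv : v ≠ 0) :
    fderiv ℝ (fderiv ℝ (fun u => (F u) ^ 2)) (lam • v)
      = fderiv ℝ (fderiv ℝ (fun u => (F u) ^ 2)) v := by
  set f : V → ℝ := fun u => (F u) ^ 2 with hf
  set T : V → (V →L[ℝ] ℝ) := fderiv ℝ f with hT
  have hlv : lam • v ≠ 0 := smul_ne_zero hlam.ne' hv
  have hsm : HasFDerivAt (fun u : V => lam • u) (lam • ContinuousLinearMap.id ℝ V) v :=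
    (hasFDerivAt_id v).const_smul lam
  have h1 : HasFDerivAt (fun u : V => T (lam • u))
      ((fderiv ℝ T (lam • v)).comp (lam • ContinuousLinearMap.id ℝ V)) v :=
    (MK.diffAt_T hF hlv).hasFDerivAt.comp v hsm
  have h2 : HasFDerivAt (fun u : V => lam • T u)
      (lam • fderiv ℝ T v) v := (MK.diffAt_T hF hv).hasFDerivAt.const_smul lam
  have hev : (fun u : V => T (lam • u)) =ᶠ[𝓝 v] fun u : V => lam • T u := by
    filter_upwards [(isOpen_compl_singleton).mem_nhds (by simpa using hv : v ∈ ({0}ᶜ : Set V))]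
      with u hu
    exact MK.fderiv_homog hF hlam (by simpa using hu)
  have heq := (h2.congr_of_eventuallyEq hev).unique h1
  have hcomp : (fderiv ℝ T (lam • v)).comp (lam • ContinuousLinearMap.id ℝ V)
      = lam • fderiv ℝ T (lam • v) := by
    ext w w'; simp [ContinuousLinearMap.smul_apply, mul_comm]
  rw [hcomp] at heq
  have h3 := congrArg (fun L : V →L[ℝ] V →L[ℝ] ℝ => lam⁻¹ • L) heq
  simpa [smul_smul, inv_mul_cancel₀ hlam.ne'] using h3.symm

lemma MK.fundTensor_homog (hF : IsMinkowskiNorm F) {lam : ℝ} (hlam : 0 < lam)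
    {v : V} (hv : v ≠ 0) (w₁ w₂ : V) :
    fundTensor F (lam • v) w₁ w₂ = fundTensor F v w₁ w₂ := by
  unfold fundTensor
  rw [MK.DT_homog hF hlam hv]

lemma MK.fundTensor_smul (F : V → ℝ) (v : V) (a : ℝ) (w : V) :
    fundTensor F v (a • w) (a • w) = a ^ 2 * fundTensor F v w w := by
  unfold fundTensor
  simp only [ContinuousLinearMap.map_smul, ContinuousLinearMap.smul_apply, smul_eq_mul]
  ring

lemma MK.legendre_apply (F : V → ℝ) {v : V} (hv : v ≠ 0) :
    legendre F v = (1 / 2 : ℝ) • fderiv ℝ (fun u => (F u) ^ 2) v := if_neg hv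

lemma MK.legendre_euler (hF : IsMinkowskiNorm F) {v : V} (hv : v ≠ 0) :
    legendre F v v = (F v) ^ 2 := by
  rw [MK.legendre_apply F hv, ContinuousLinearMap.smul_apply, smul_eq_mul,
    MK.euler hF hv]; ring

lemma MK.legendre_homog (hF : IsMinkowskiNorm F) {a : ℝ} (ha : 0 ≤ a) (v : V) :
    legendre F (a • v) = a • legendre F v := by
  rcases eq_or_lt_of_le ha with h | h
  · simp [← h, legendre]
  rcases eq_or_ne v 0 with rfl | hv
  · simp [legendre]
  have hav : a • v ≠ 0 := smul_ne_zero h.ne' hv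
  rw [MK.legendre_apply F hav, MK.legendre_apply F hv, MK.fderiv_homog hF h hv,
    smul_comm]

end Aux
section Main

variable {m : ℕ}

local notation "V'" => EuclideanSpace ℝ (Fin m)

/-- Uniform lower bounds from compactness of the sphere. -/
lemma MK.exists_bound (hm : 2 ≤ m) (F : EuclideanSpace ℝ (Fin m) → ℝ)
    (hF : IsMinkowskiNorm F) :
    ∃ c : ℝ, 0 < c ∧
      (∀ v w : EuclideanSpace ℝ (Fin m), v ≠ 0 → c * ‖w‖ ^ 2 ≤ fundTensor F v w w) ∧
      (∀ v : EuclideanSpace ℝ (Fin m), c * ‖v‖ ^ 2 ≤ (F v) ^ 2) := by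
  set S := Metric.sphere (0 : V') 1 with hSdef
  have hS : IsCompact S := isCompact_sphere 0 1
  have hne : S.Nonempty := by
    refine ⟨EuclideanSpace.single (⟨0, by omega⟩ : Fin m) (1 : ℝ), ?_⟩
    simp [hSdef, EuclideanSpace.norm_single]
  have hnz : ∀ x ∈ S, x ≠ 0 := by
    intro x hx h0
    rw [hSdef, mem_sphere_zero_iff_norm] at hx
    rw [h0] at hx; simp at hx
  -- minimum of the fundamental tensor on the product of spheres
  have hcont : ContinuousOn (fun p : V' × V' => fundTensor F p.1 p.2 p.2) (S ×ˢ S) := by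
    intro p hp
    have hp1 : p.1 ≠ 0 := hnz _ hp.1
    apply ContinuousAt.continuousWithinAt
    have h1 : ContinuousAt
        (fun p : V' × V' => fderiv ℝ (fderiv ℝ (fun u => (F u) ^ 2)) p.1) p :=
      (MK.continuousAt_DT hF hp1).comp continuous_fst.continuousAt
    have h2 : ContinuousAt
        (fun p : V' × V' => fderiv ℝ (fderiv ℝ (fun u => (F u) ^ 2)) p.1 p.2) p := by
      have := (isBoundedBilinearMap_apply.continuous.continuousAt).comp
        (h1.prodMk continuous_snd.continuousAt); exact this
    have h3 : ContinuousAt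
        (fun p : V' × V' => fderiv ℝ (fderiv ℝ (fun u => (F u) ^ 2)) p.1 p.2 p.2) p := by
      have := (isBoundedBilinearMap_apply.continuous.continuousAt).comp
        (h2.prodMk continuous_snd.continuousAt); exact this
    exact continuousAt_const.mul h3
  obtain ⟨p₀, hp₀, hmin'⟩ := (hS.prod hS).exists_isMinOn (hne.prod hne) hcont
  rw [isMinOn_iff] at hmin'
  have hmin := hmin'
  set c₀ := fundTensor F p₀.1 p₀.2 p₀.2 with hc₀def
  have hc₀ : 0 < c₀ :=
    hF.posdef _ (hnz _ (Set.mem_prod.mp hp₀).1) _ (hnz _ (Set.mem_prod.mp hp₀).2)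
  -- minimum of F² on the sphere
  obtain ⟨q₀, hq₀, hmin2'⟩ := hS.exists_isMinOn hne ((hF.continuous.pow 2).continuousOn)
  rw [isMinOn_iff] at hmin2'
  have hmin2 := hmin2'
  set c₁ := (F q₀) ^ 2 with hc₁def
  have hc₁ : 0 < c₁ := pow_pos (hF.pos _ (hnz _ hq₀)) 2
  refine ⟨min c₀ c₁, lt_min hc₀ hc₁, ?_, ?_⟩
  · intro v w hv
    rcases eq_or_ne w 0 with rfl | hw
    · simp [fundTensor]
    have hvn : (0:ℝ) < ‖v‖ := norm_pos_iff.mpr hv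
    have hwn : (0:ℝ) < ‖w‖ := norm_pos_iff.mpr hw
    have hvm : ‖v‖⁻¹ • v ∈ S := by
      rw [hSdef, mem_sphere_zero_iff_norm, norm_smul, norm_inv, norm_norm,
        inv_mul_cancel₀ hvn.ne']
    have hwm : ‖w‖⁻¹ • w ∈ S := by
      rw [hSdef, mem_sphere_zero_iff_norm, norm_smul, norm_inv, norm_norm,
        inv_mul_cancel₀ hwn.ne']
    have key : fundTensor F v w w
        = ‖w‖ ^ 2 * fundTensor F (‖v‖⁻¹ • v) (‖w‖⁻¹ • w) (‖w‖⁻¹ • w) := by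
      calc fundTensor F v w w = fundTensor F (‖v‖⁻¹ • v) w w :=
            (MK.fundTensor_homog hF (inv_pos.mpr hvn) hv w w).symm
        _ = fundTensor F (‖v‖⁻¹ • v) (‖w‖ • ‖w‖⁻¹ • w) (‖w‖ • ‖w‖⁻¹ • w) := by
            rw [smul_inv_smul₀ hwn.ne']
        _ = ‖w‖ ^ 2 * fundTensor F (‖v‖⁻¹ • v) (‖w‖⁻¹ • w) (‖w‖⁻¹ • w) :=
            MK.fundTensor_smul F _ _ _
    have hb := hmin (‖v‖⁻¹ • v, ‖w‖⁻¹ • w) (Set.mk_mem_prod hvm hwm)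
    rw [key]
    calc min c₀ c₁ * ‖w‖ ^ 2 ≤ c₀ * ‖w‖ ^ 2 := by
          apply mul_le_mul_of_nonneg_right (min_le_left _ _) (by positivity)
      _ ≤ ‖w‖ ^ 2 * fundTensor F (‖v‖⁻¹ • v) (‖w‖⁻¹ • w) (‖w‖⁻¹ • w) := by
          rw [mul_comm c₀ (‖w‖ ^ 2)]
          exact mul_le_mul_of_nonneg_left hb (by positivity)
  · intro v
    rcases eq_or_ne v 0 with rfl | hv
    · simp [hF.map_zero]
    have hvn : (0:ℝ) < ‖v‖ := norm_pos_iff.mpr hv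
    have hvm : ‖v‖⁻¹ • v ∈ S := by
      rw [hSdef, mem_sphere_zero_iff_norm, norm_smul, norm_inv, norm_norm,
        inv_mul_cancel₀ hvn.ne']
    have key : (F v) ^ 2 = ‖v‖ ^ 2 * (F (‖v‖⁻¹ • v)) ^ 2 := by
      conv_lhs => rw [← smul_inv_smul₀ hvn.ne' v]
      exact MK.sq_homog hF hvn _
    have hb := hmin2 _ hvm
    rw [key]
    calc min c₀ c₁ * ‖v‖ ^ 2 ≤ c₁ * ‖v‖ ^ 2 := by
          apply mul_le_mul_of_nonneg_right (min_le_right _ _) (by positivity)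
      _ ≤ ‖v‖ ^ 2 * (F (‖v‖⁻¹ • v)) ^ 2 := by
          rw [mul_comm c₁ (‖v‖ ^ 2)]
          exact mul_le_mul_of_nonneg_left hb (by positivity)

/-- The key segment estimate, for segments avoiding the origin. -/
lemma MK.seg (F : EuclideanSpace ℝ (Fin m) → ℝ) (hF : IsMinkowskiNorm F)
    {c₀ : ℝ}
    (hc₀ : ∀ v w : EuclideanSpace ℝ (Fin m), v ≠ 0 → c₀ * ‖w‖ ^ 2 ≤ fundTensor F v w w)
    (v₁ u : EuclideanSpace ℝ (Fin m))
    (hseg : ∀ t : ℝ, t ∈ Set.Icc (0:ℝ) 1 → v₁ + t • u ≠ 0) :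
    c₀ * ‖u‖ ^ 2 ≤ (legendre F (v₁ + u) - legendre F v₁) u := by
  set f : V' → ℝ := fun u => (F u) ^ 2 with hfdef
  set T : V' → (V' →L[ℝ] ℝ) := fderiv ℝ f with hTdef
  set φ : ℝ → ℝ := fun t => T (v₁ + t • u) u with hφdef
  have hγd : ∀ t : ℝ, HasDerivAt (fun s : ℝ => v₁ + s • u) u t := by
    intro t
    simpa using (((hasDerivAt_id t).smul_const u).const_add v₁)
  have hderiv : ∀ t ∈ Set.Ioo (0:ℝ) 1,
      HasDerivAt φ (fderiv ℝ T (v₁ + t • u) u u) t := by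
    intro t ht
    have hne := hseg t (Set.mem_Icc_of_Ioo ht)
    have h1 : HasDerivAt (fun s : ℝ => T (v₁ + s • u)) (fderiv ℝ T (v₁ + t • u) u) t :=
      (MK.diffAt_T hF hne).hasFDerivAt.comp_hasDerivAt t (hγd t)
    have h2 := h1.clm_apply (hasDerivAt_const t u)
    simpa using h2
  have hcont : ContinuousOn φ (Set.Icc (0:ℝ) 1) := by
    intro t ht
    apply ContinuousAt.continuousWithinAt
    have hne := hseg t ht
    have hγc : ContinuousAt (fun s : ℝ => v₁ + s • u) t :=
      (continuous_const.add (continuous_id.smul continuous_const)).continuousAt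
    have hTc : ContinuousAt T (v₁ + t • u) := (MK.contDiffAt_T hF hne).continuousAt
    have h1 : ContinuousAt (fun s : ℝ => T (v₁ + s • u)) t := Filter.Tendsto.comp hTc hγc
    have := (isBoundedBilinearMap_apply.continuous.continuousAt).comp
      (h1.prodMk (continuousAt_const (y := u))); exact this
  obtain ⟨ξ, hξ, hsl⟩ := exists_hasDerivAt_eq_slope φ
    (fun t => fderiv ℝ T (v₁ + t • u) u u) zero_lt_one hcont hderiv
  have hξ' : v₁ + ξ • u ≠ 0 := hseg ξ (Set.mem_Icc_of_Ioo hξ)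
  have hft : c₀ * ‖u‖ ^ 2 ≤ (1/2) * (fderiv ℝ T (v₁ + ξ • u) u u) := hc₀ _ _ hξ'
  have hφ1 : φ 1 - φ 0 = fderiv ℝ T (v₁ + ξ • u) u u := by
    rw [hsl]; ring
  have hne1 : v₁ + u ≠ 0 := by
    have := hseg 1 (by norm_num)
    rwa [one_smul] at this
  have hne0 : v₁ ≠ 0 := by
    have := hseg 0 (by norm_num)
    rwa [zero_smul, add_zero] at this
  have hl : (legendre F (v₁ + u) - legendre F v₁) u = (1/2) * (φ 1) - (1/2) * (φ 0) := by
    rw [ContinuousLinearMap.sub_apply, MK.legendre_apply F hne1, MK.legendre_apply F hne0,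
      ContinuousLinearMap.smul_apply, ContinuousLinearMap.smul_apply, smul_eq_mul, smul_eq_mul,
      hφdef]
    simp [hTdef, hfdef]
  rw [hl]
  linarith [hφ1, hft]

end Main

/-- strong monotonicity of the Legendre map of a strongly convex Minkowski
norm, on all of `ℝ^m` (including segments through the origin). -/
theorem legendre_strongly_monotone
    {m : ℕ} (hm : 2 ≤ m) (F : EuclideanSpace ℝ (Fin m) → ℝ)
    (hF : IsMinkowskiNorm F) :
    ∃ c : ℝ, 0 < c ∧ ∀ v₁ v₂ : EuclideanSpace ℝ (Fin m),
      c * ‖v₂ - v₁‖ ^ 2 ≤ (legendre F v₂ - legendre F v₁) (v₂ - v₁) := by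
  obtain ⟨c, hc, hfund, hsq⟩ := MK.exists_bound hm F hF
  refine ⟨c, hc, ?_⟩
  intro v₁ v₂
  set u := v₂ - v₁ with hu
  rcases eq_or_ne u 0 with h0 | hune
  · rw [h0]; simp
  by_cases hdeg : ∃ t ∈ Set.Icc (0:ℝ) 1, v₁ + t • u = 0
  · -- degenerate case: the segment passes through the origin
    obtain ⟨t₀, ht₀, hzero⟩ := hdeg
    have hv₁ : v₁ = t₀ • (-u) := by
      rw [smul_neg]
      exact eq_neg_of_add_eq_zero_left hzero
    have hv₂ : v₂ = (1 - t₀) • u := by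
      have h2 : v₂ = v₁ + u := by rw [hu]; abel
      rw [h2, hv₁, smul_neg, sub_smul, one_smul]
      abel
    have hl₂ : legendre F v₂ = (1 - t₀) • legendre F u := by
      rw [hv₂]; exact MK.legendre_homog hF (by linarith [ht₀.2]) u
    have hl₁ : legendre F v₁ = t₀ • legendre F (-u) := by
      rw [hv₁]; exact MK.legendre_homog hF ht₀.1 (-u)
    have hneg : (legendre F (-u)) u = -((F (-u)) ^ 2) := by
      have h1 : (legendre F (-u)) u = -((legendre F (-u)) (-u)) := by
        rw [map_neg, neg_neg]
      rw [h1, MK.legendre_euler hF (neg_ne_zero.mpr hune)]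
    have heval : (legendre F v₂ - legendre F v₁) u
        = (1 - t₀) * (F u) ^ 2 + t₀ * (F (-u)) ^ 2 := by
      rw [ContinuousLinearMap.sub_apply, hl₂, hl₁,
        ContinuousLinearMap.smul_apply, ContinuousLinearMap.smul_apply,
        smul_eq_mul, smul_eq_mul, MK.legendre_euler hF hune, hneg]
      ring
    rw [heval]
    have b1 : c * ‖u‖ ^ 2 ≤ (F u) ^ 2 := hsq u
    have b2 : c * ‖u‖ ^ 2 ≤ (F (-u)) ^ 2 := by
      have := hsq (-u); rwa [norm_neg] at this
    nlinarith [ht₀.1, ht₀.2]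
  · -- nondegenerate case: segment avoids the origin
    push_neg at hdeg
    have hseg : ∀ t : ℝ, t ∈ Set.Icc (0:ℝ) 1 → v₁ + t • u ≠ 0 := hdeg
    have := MK.seg F hF hfund v₁ u hseg
    have h2 : v₁ + u = v₂ := by rw [hu]; abel
    rwa [h2] at this
end
end

section
/- Let k ≥ 2 and let F be a strongly convex Minkowski norm on ℝ^m which is of class C^{k+1} on ℝ^m ∖ {0}. Then its dual co-Finsler norm F^* is of class C^k on (ℝ^m)^* ∖ {0}. -/
open scoped Topology Classical
open MeasureTheory
noncomputable section

namespace MN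

variable {V : Type*} [NormedAddCommGroup V] [NormedSpace ℝ V] {F : V → ℝ}

theorem ne_zero (hF : IsMinkowskiNorm F) {v : V} (hv : v ≠ 0) : F v ≠ 0 :=
  (hF.pos v hv).ne'

theorem fsq_contDiffOn (hF : IsMinkowskiNorm F) :
    ContDiffOn ℝ 2 (fun u => F u ^ 2) ({0}ᶜ : Set V) := hF.smooth.pow 2

theorem fsq_diffAt (hF : IsMinkowskiNorm F) {v : V} (hv : v ≠ 0) :
    DifferentiableAt ℝ (fun u => F u ^ 2) v :=
  (((fsq_contDiffOn hF).differentiableOn (by norm_num)).differentiableAt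
    (isOpen_compl_singleton.mem_nhds hv))

theorem euler (hF : IsMinkowskiNorm F) {v : V} (hv : v ≠ 0) :
    fderiv ℝ (fun u => F u ^ 2) v v = 2 * F v ^ 2 := by
  have hd : HasDerivAt (fun t : ℝ => t • v) v 1 := by
    simpa using (hasDerivAt_id (1 : ℝ)).smul_const v
  have hf : HasFDerivAt (fun u => F u ^ 2) (fderiv ℝ (fun u => F u ^ 2) v) ((1 : ℝ) • v) := by
    rw [one_smul]; exact (fsq_diffAt hF hv).hasFDerivAt
  have h1 : HasDerivAt (fun t : ℝ => F (t • v) ^ 2) (fderiv ℝ (fun u => F u ^ 2) v v) 1 := by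
    exact hf.comp_hasDerivAt 1 hd
  have h2 : HasDerivAt (fun t : ℝ => F (t • v) ^ 2) (2 * F v ^ 2) 1 := by
    have heq : (fun t : ℝ => F (t • v) ^ 2) =ᶠ[𝓝 (1 : ℝ)] fun t => t ^ 2 * F v ^ 2 := by
      filter_upwards [Ioi_mem_nhds (by norm_num : (0 : ℝ) < 1)] with t ht
      rw [hF.homog t ht v]; ring
    have h3 : HasDerivAt (fun t : ℝ => t ^ 2 * F v ^ 2) (2 * F v ^ 2) 1 := by
      simpa using (hasDerivAt_pow 2 (1 : ℝ)).mul_const (F v ^ 2)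
    exact h3.congr_of_eventuallyEq heq
  exact h1.unique h2

theorem strictConvex (hF : IsMinkowskiNorm F) {u w : V} (hu : u ≠ 0) (hw : w ≠ u) :
    F u ^ 2 + fderiv ℝ (fun y => F y ^ 2) u (w - u) < F w ^ 2 := by
  have hd : w - u ≠ 0 := sub_ne_zero.mpr hw
  by_cases hseg : ∃ t ∈ Set.Icc (0 : ℝ) 1, u + t • (w - u) = 0
  · -- the segment passes through the origin: then w = c • u with c ≤ 0
    obtain ⟨t₀, ht₀, hzero⟩ := hseg
    have ht₀0 : t₀ ≠ 0 := by
      rintro rfl; simp at hzero; exact hu hzero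
    have ht₀pos : 0 < t₀ := lt_of_le_of_ne ht₀.1 (Ne.symm ht₀0)
    have hinv : 1 ≤ t₀⁻¹ := by
      have h2 : 0 < t₀⁻¹ := inv_pos.mpr ht₀pos
      have h3 : t₀ * t₀⁻¹ = 1 := mul_inv_cancel₀ ht₀0
      nlinarith [ht₀.2]
    obtain ⟨c, hcle, hwc⟩ : ∃ c : ℝ, c ≤ 0 ∧ w = c • u := by
      refine ⟨1 - t₀⁻¹, by linarith, ?_⟩
      have h1 : t₀⁻¹ • (u + t₀ • (w - u)) = t₀⁻¹ • (0 : V) := by rw [hzero]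
      rw [smul_add, smul_smul, inv_mul_cancel₀ ht₀0, one_smul, smul_zero] at h1
      have h2 : w - u = -(t₀⁻¹ • u) := eq_neg_of_add_eq_zero_right h1
      have h3 : w = u + (w - u) := by abel
      rw [h3, h2, sub_smul, one_smul]; abel
    have hfd : fderiv ℝ (fun y => F y ^ 2) u (w - u) = (c - 1) * (2 * F u ^ 2) := by
      have h4 : w - u = (c - 1) • u := by rw [hwc, sub_smul, one_smul]
      rw [h4, ContinuousLinearMap.map_smul, smul_eq_mul, MN.euler hF hu]
    rw [hfd]
    rcases eq_or_lt_of_le hcle with hc0 | hcneg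
    · have hw0 : w = 0 := by rw [hwc, hc0, zero_smul]
      rw [hw0, hF.map_zero, hc0]
      have := hF.pos u hu
      nlinarith
    · have hw0 : w ≠ 0 := by
        rw [hwc]
        exact smul_ne_zero (ne_of_lt hcneg) hu
      have h1 := hF.pos w hw0
      have h2 := hF.pos u hu
      nlinarith
  · -- the segment avoids the origin
    push_neg at hseg
    set d := w - u with hdd
    set x : ℝ → V := fun t => u + t • d with hx
    set φ : ℝ → ℝ := fun t => F (x t) ^ 2 with hφ
    set φ' : ℝ → ℝ := fun t => fderiv ℝ (fun y => F y ^ 2) (x t) d with hφ'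
    have hxder : ∀ t : ℝ, HasDerivAt x d t := fun t => by
      simpa [hx] using ((hasDerivAt_id t).smul_const d).const_add u
    have hder : ∀ t ∈ Set.Icc (0 : ℝ) 1, HasDerivAt φ (φ' t) t := by
      intro t ht
      exact ((MN.fsq_diffAt hF (hseg t ht)).hasFDerivAt).comp_hasDerivAt t (hxder t)
    have hD1 : ContDiffOn ℝ 1 (fderiv ℝ fun y => F y ^ 2) ({0}ᶜ : Set V) :=
      (MN.fsq_contDiffOn hF).fderiv_of_isOpen isOpen_compl_singleton (by norm_num)
    have hD1d : ∀ {y : V}, y ≠ 0 → DifferentiableAt ℝ (fderiv ℝ fun y => F y ^ 2) y :=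
      fun {y} hy => (hD1.differentiableOn one_ne_zero).differentiableAt
        (isOpen_compl_singleton.mem_nhds hy)
    have hder2 : ∀ t ∈ Set.Ioo (0 : ℝ) 1,
        HasDerivAt φ' (2 * fundTensor F (x t) d d) t := by
      intro t ht
      have hxt : x t ≠ 0 := hseg t (Set.Ioo_subset_Icc_self ht)
      have h1 : HasDerivAt (fun s => fderiv ℝ (fun y => F y ^ 2) (x s))
          (fderiv ℝ (fderiv ℝ fun y => F y ^ 2) (x t) d) t :=
        ((hD1d hxt).hasFDerivAt).comp_hasDerivAt t (hxder t)
      have h2 := ((ContinuousLinearMap.apply ℝ ℝ d).hasFDerivAt).comp_hasDerivAt t h1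
      have h3 : (2 : ℝ) * fundTensor F (x t) d d
          = fderiv ℝ (fderiv ℝ fun y => F y ^ 2) (x t) d d := by
        simp only [fundTensor]; ring
      rw [h3]
      exact h2
    have hxcont : Continuous x := by
      exact continuous_const.add (continuous_id.smul continuous_const)
    have hφ'cont : ContinuousOn φ' (Set.Icc (0 : ℝ) 1) := by
      have hcomp : ContinuousOn (fun t => fderiv ℝ (fun y => F y ^ 2) (x t))
          (Set.Icc (0 : ℝ) 1) :=
        hD1.continuousOn.comp hxcont.continuousOn (fun t ht => hseg t ht)
      exact (ContinuousLinearMap.apply ℝ ℝ d).continuous.comp_continuousOn hcomp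
    have hmono : StrictMonoOn φ' (Set.Icc (0 : ℝ) 1) := by
      apply strictMonoOn_of_deriv_pos (convex_Icc 0 1) hφ'cont
      intro t ht
      rw [interior_Icc] at ht
      rw [(hder2 t ht).deriv]
      have := hF.posdef (x t) (hseg t (Set.Ioo_subset_Icc_self ht)) d hd
      linarith
    have hφcont : ContinuousOn φ (Set.Icc (0 : ℝ) 1) :=
      fun t ht => (hder t ht).continuousAt.continuousWithinAt
    obtain ⟨c, hc, hslope⟩ := exists_hasDerivAt_eq_slope φ φ' (by norm_num : (0 : ℝ) < 1)
      hφcont (fun t ht => hder t (Set.Ioo_subset_Icc_self ht))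
    have hlt : φ' 0 < φ' c :=
      hmono (Set.left_mem_Icc.mpr (by norm_num)) (Set.Ioo_subset_Icc_self hc) hc.1
    have hx0 : x 0 = u := by simp [hx]
    have hx1 : x 1 = w := by simp [hx, hdd]
    have hφ0 : φ 0 = F u ^ 2 := by simp [hφ, hx]
    have hφ1 : φ 1 = F w ^ 2 := by simp [hφ, hx, hdd]
    have hφ'0 : φ' 0 = fderiv ℝ (fun y => F y ^ 2) u (w - u) := by simp [hφ', hx, hdd]
    rw [hφ0, hφ1] at hslope
    rw [hφ'0] at hlt
    have hc2 : φ' c = F w ^ 2 - F u ^ 2 := by rw [hslope]; ring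
    rw [hc2] at hlt
    linarith

theorem legendre_apply (hu : u ≠ 0) :
    legendre F u = (1 / 2 : ℝ) • fderiv ℝ (fun y => F y ^ 2) u := if_neg hu

theorem legendre_self (hF : IsMinkowskiNorm F) {u : V} (hu : u ≠ 0) :
    legendre F u u = F u ^ 2 := by
  rw [legendre_apply hu]
  simp only [ContinuousLinearMap.smul_apply, smul_eq_mul]
  rw [MN.euler hF hu]; ring

theorem legendre_inv_smul (hF : IsMinkowskiNorm F) {u : V} (hu : u ≠ 0) :
    legendre F u ((F u)⁻¹ • u) = F u := by
  rw [ContinuousLinearMap.map_smul, smul_eq_mul, legendre_self hF hu]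
  field_simp [MN.ne_zero hF hu]

theorem isGreatest (hF : IsMinkowskiNorm F) {u : V} (hu : u ≠ 0) :
    IsGreatest ((fun v => legendre F u v) '' {v | F v = 1}) (F u) := by
  have hFu := hF.pos u hu
  constructor
  · refine ⟨(F u)⁻¹ • u, ?_, legendre_inv_smul hF hu⟩
    show F ((F u)⁻¹ • u) = 1
    rw [hF.homog _ (inv_pos.mpr hFu) u]
    field_simp
  · rintro y ⟨v, hv1, rfl⟩
    have hv1 : F v = 1 := hv1
    have hv0 : v ≠ 0 := by
      rintro rfl; rw [hF.map_zero] at hv1; norm_num at hv1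
    show legendre F u v ≤ F u
    by_cases hwu : F u • v = u
    · have hveq : v = (F u)⁻¹ • u := by
        have h5 : (F u)⁻¹ • (F u • v) = (F u)⁻¹ • u := by rw [hwu]
        rw [smul_smul, inv_mul_cancel₀ (MN.ne_zero hF hu), one_smul] at h5
        exact h5
      rw [hveq, legendre_inv_smul hF hu]
    · have hstrict := MN.strictConvex hF hu hwu
      have hFw : F (F u • v) = F u := by
        rw [hF.homog _ hFu v, hv1, mul_one]
      have hfd : fderiv ℝ (fun y => F y ^ 2) u (F u • v - u)
          = F u * fderiv ℝ (fun y => F y ^ 2) u v - 2 * F u ^ 2 := by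
        rw [ContinuousLinearMap.map_sub, ContinuousLinearMap.map_smul, smul_eq_mul,
          MN.euler hF hu]
      rw [hFw, hfd] at hstrict
      have hlt : fderiv ℝ (fun y => F y ^ 2) u v < 2 * F u := by
        have h1 : F u * fderiv ℝ (fun y => F y ^ 2) u v < F u * (2 * F u) := by nlinarith
        exact lt_of_mul_lt_mul_left h1 hFu.le
      rw [legendre_apply hu]
      simp only [ContinuousLinearMap.smul_apply, smul_eq_mul]
      linarith

theorem dualNorm_legendre (hF : IsMinkowskiNorm F) {u : V} (hu : u ≠ 0) :
    dualNorm F (legendre F u) = F u :=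
  (isGreatest hF hu).csSup_eq

theorem surj {m : ℕ} (hm : 0 < m) {F : EuclideanSpace ℝ (Fin m) → ℝ}
    (hF : IsMinkowskiNorm F) {ω : EuclideanSpace ℝ (Fin m) →L[ℝ] ℝ} (hω : ω ≠ 0) :
    ∃ u : EuclideanSpace ℝ (Fin m), u ≠ 0 ∧ legendre F u = ω := by
  haveI : Nontrivial (EuclideanSpace ℝ (Fin m)) := by
    apply Module.nontrivial_of_finrank_pos (R := ℝ)
    rw [finrank_euclideanSpace_fin]; omega
  -- positive lower bound on the unit sphere
  obtain ⟨v₁, hv₁⟩ := exists_norm_eq (EuclideanSpace ℝ (Fin m)) zero_le_one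
  have hsph : (Metric.sphere (0 : (EuclideanSpace ℝ (Fin m))) 1).Nonempty :=
    ⟨v₁, by simpa [mem_sphere_zero_iff_norm] using hv₁⟩
  obtain ⟨z, hz, hzmin⟩ := (isCompact_sphere (0 : (EuclideanSpace ℝ (Fin m))) 1).exists_isMinOn hsph
    hF.continuous.continuousOn
  have hz0 : z ≠ 0 := by
    intro h; rw [mem_sphere_zero_iff_norm, h, norm_zero] at hz; norm_num at hz
  set c : ℝ := F z with hc
  have hcpos : 0 < c := hF.pos z hz0
  have hcoer : ∀ v : (EuclideanSpace ℝ (Fin m)), c * ‖v‖ ≤ F v := by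
    intro v
    rcases eq_or_ne v 0 with rfl | hv
    · simp [hF.map_zero]
    · have hnv : (0 : ℝ) < ‖v‖ := norm_pos_iff.mpr hv
      have hunit : ‖v‖⁻¹ • v ∈ Metric.sphere (0 : (EuclideanSpace ℝ (Fin m))) 1 := by
        rw [mem_sphere_zero_iff_norm, norm_smul, norm_inv, norm_norm,
          inv_mul_cancel₀ hnv.ne']
      have h1 : c ≤ F (‖v‖⁻¹ • v) := hzmin hunit
      have h2 : F v = ‖v‖ * F (‖v‖⁻¹ • v) := by
        rw [← hF.homog ‖v‖ hnv (‖v‖⁻¹ • v), smul_smul, mul_inv_cancel₀ hnv.ne', one_smul]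
      rw [h2]
      nlinarith
  -- the functional to minimize
  set G : (EuclideanSpace ℝ (Fin m)) → ℝ := fun v => F v ^ 2 - 2 * ω v with hG
  have hGcont : Continuous G := ((hF.continuous.pow 2).sub
    (continuous_const.mul ω.continuous))
  have hGlb : ∀ v : (EuclideanSpace ℝ (Fin m)), ‖v‖ * (c ^ 2 * ‖v‖ - 2 * ‖ω‖) ≤ G v := by
    intro v
    have h1 := hcoer v
    have h2 : ω v ≤ ‖ω‖ * ‖v‖ := le_trans (le_abs_self _) (ω.le_opNorm v)
    have h3 : (0 : ℝ) ≤ ‖v‖ := norm_nonneg v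
    have h4 : 0 ≤ c * ‖v‖ := by positivity
    simp only [hG]
    nlinarith
  set R : ℝ := (2 * ‖ω‖ + 1) / c ^ 2 with hR
  have hRpos : 0 < R := by positivity
  have hout : ∀ v : (EuclideanSpace ℝ (Fin m)), R ≤ ‖v‖ → 0 < G v ∨ v = 0 := by
    intro v hv
    left
    have h1 := hGlb v
    have h2 : c ^ 2 * R = 2 * ‖ω‖ + 1 := by
      rw [hR]; field_simp
    have h3 : 0 < ‖v‖ := lt_of_lt_of_le hRpos hv
    have h4 : c ^ 2 * R ≤ c ^ 2 * ‖v‖ := by nlinarith [sq_nonneg c]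
    have h5 : ‖v‖ * 1 ≤ ‖v‖ * (c ^ 2 * ‖v‖ - 2 * ‖ω‖) := by nlinarith
    nlinarith
  obtain ⟨u, humem, humin⟩ := (isCompact_closedBall (0 : (EuclideanSpace ℝ (Fin m))) R).exists_isMinOn
    ⟨0, by simp [hRpos.le]⟩ hGcont.continuousOn
  -- a point with negative value
  obtain ⟨v₂, hv₂⟩ : ∃ v : (EuclideanSpace ℝ (Fin m)), ω v ≠ 0 := by
    by_contra h; push_neg at h
    exact hω (ContinuousLinearMap.ext fun v => by simp [h v])
  obtain ⟨v₃, hv₃⟩ : ∃ v : (EuclideanSpace ℝ (Fin m)), 0 < ω v := by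
    rcases lt_or_gt_of_ne hv₂ with h | h
    · exact ⟨-v₂, by simpa using h⟩
    · exact ⟨v₂, h⟩
  have hv₃0 : v₃ ≠ 0 := by rintro rfl; simp at hv₃
  have hFv₃ : 0 < F v₃ := hF.pos v₃ hv₃0
  set t : ℝ := min (ω v₃ / F v₃ ^ 2) (R / (‖v₃‖ + 1)) with ht
  have htpos : 0 < t := by
    apply lt_min
    · positivity
    · positivity
  have htball : t • v₃ ∈ Metric.closedBall (0 : (EuclideanSpace ℝ (Fin m))) R := by
    rw [Metric.mem_closedBall, dist_zero_right, norm_smul, Real.norm_eq_abs,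
      abs_of_pos htpos]
    have h1 : t ≤ R / (‖v₃‖ + 1) := min_le_right _ _
    have h2 : (0 : ℝ) ≤ ‖v₃‖ := norm_nonneg _
    have h3 : 0 < ‖v₃‖ + 1 := by linarith
    rw [le_div_iff₀ h3] at h1
    nlinarith
  have hGneg : G (t • v₃) < 0 := by
    have h1 : F (t • v₃) = t * F v₃ := hF.homog t htpos v₃
    have h2 : t ≤ ω v₃ / F v₃ ^ 2 := min_le_left _ _
    have h3 : t * F v₃ ^ 2 ≤ ω v₃ := by
      rw [le_div_iff₀ (by positivity)] at h2
      exact h2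
    simp only [hG, h1, ContinuousLinearMap.map_smul, smul_eq_mul]
    nlinarith
  have hGu_neg : G u < 0 := lt_of_le_of_lt (humin htball) hGneg
  have hu0 : u ≠ 0 := by
    rintro rfl
    simp only [hG, hF.map_zero, map_zero] at hGu_neg
    norm_num at hGu_neg
  have huR : ‖u‖ < R := by
    rcases lt_or_ge ‖u‖ R with h | h
    · exact h
    · rcases hout u h with h1 | h1
      · linarith
      · exact absurd h1 hu0
  have hlocal : IsLocalMin G u := by
    apply humin.isLocalMin
    exact Filter.mem_of_superset (Metric.isOpen_ball.mem_nhds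
      (by rwa [Metric.mem_ball, dist_zero_right])) Metric.ball_subset_closedBall
  have hGd : HasFDerivAt G (fderiv ℝ (fun y => F y ^ 2) u - (2 : ℝ) • ω) u := by
    have h1 := (MN.fsq_diffAt hF hu0).hasFDerivAt
    have h2 : HasFDerivAt (fun v : (EuclideanSpace ℝ (Fin m)) => 2 * ω v) ((2 : ℝ) • ω) u :=
      ω.hasFDerivAt.const_mul 2
    exact h1.sub h2
  have hfd0 : fderiv ℝ (fun y => F y ^ 2) u - (2 : ℝ) • ω = 0 := by
    rw [← hGd.fderiv]
    exact hlocal.fderiv_eq_zero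
  have hfd : fderiv ℝ (fun y => F y ^ 2) u = (2 : ℝ) • ω := by
    have := sub_eq_zero.mp hfd0; exact this
  refine ⟨u, hu0, ?_⟩
  rw [MN.legendre_apply hu0, hfd, smul_smul]
  norm_num

theorem legendre_contDiffOn {k : ℕ} {V : Type*} [NormedAddCommGroup V] [NormedSpace ℝ V]
    {F : V → ℝ} (hsm : ContDiffOn ℝ (k + 1 : ℕ) F ({0}ᶜ : Set V)) :
    ContDiffOn ℝ (k : ℕ) (legendre F) ({0}ᶜ : Set V) := by
  have h1 : ContDiffOn ℝ (k + 1 : ℕ) (fun u => F u ^ 2) ({0}ᶜ : Set V) := hsm.pow 2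
  have h2 : ContDiffOn ℝ (k : ℕ) (fderiv ℝ fun u => F u ^ 2) ({0}ᶜ : Set V) :=
    h1.fderiv_of_isOpen isOpen_compl_singleton (by exact_mod_cast le_refl (k + 1 : ℕ))
  exact (h2.const_smul (1 / 2 : ℝ)).congr fun v hv => if_neg hv

theorem hasFDerivAt_legendre {V : Type*} [NormedAddCommGroup V] [NormedSpace ℝ V]
    {F : V → ℝ} (hF : IsMinkowskiNorm F) {u : V} (hu : u ≠ 0) :
    HasFDerivAt (legendre F)
      ((1 / 2 : ℝ) • fderiv ℝ (fderiv ℝ fun y => F y ^ 2) u) u := by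
  have hD1 : ContDiffOn ℝ 1 (fderiv ℝ fun y => F y ^ 2) ({0}ᶜ : Set V) :=
    (MN.fsq_contDiffOn hF).fderiv_of_isOpen isOpen_compl_singleton (by norm_num)
  have hD1d : DifferentiableAt ℝ (fderiv ℝ fun y => F y ^ 2) u :=
    (hD1.differentiableOn one_ne_zero).differentiableAt (isOpen_compl_singleton.mem_nhds hu)
  have h1 : HasFDerivAt (fun v => (1 / 2 : ℝ) • fderiv ℝ (fun y => F y ^ 2) v)
      ((1 / 2 : ℝ) • fderiv ℝ (fderiv ℝ fun y => F y ^ 2) u) u :=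
    hD1d.hasFDerivAt.const_smul (1 / 2 : ℝ)
  apply h1.congr_of_eventuallyEq
  filter_upwards [isOpen_compl_singleton.mem_nhds hu] with v hv
  exact if_neg hv

theorem fderiv_legendre_apply {V : Type*} [NormedAddCommGroup V] [NormedSpace ℝ V]
    {F : V → ℝ} (u w v' : V) :
    ((1 / 2 : ℝ) • fderiv ℝ (fderiv ℝ fun y => F y ^ 2) u) w v' = fundTensor F u w v' := by
  simp [fundTensor, ContinuousLinearMap.smul_apply, smul_eq_mul]

theorem injective_fderiv_legendre {V : Type*} [NormedAddCommGroup V] [NormedSpace ℝ V]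
    {F : V → ℝ} (hF : IsMinkowskiNorm F) {u : V} (hu : u ≠ 0) :
    Function.Injective ((1 / 2 : ℝ) • fderiv ℝ (fderiv ℝ fun y => F y ^ 2) u) := by
  set A := (1 / 2 : ℝ) • fderiv ℝ (fderiv ℝ fun y => F y ^ 2) u with hA
  have h0 : ∀ w : V, A w = 0 → w = 0 := by
    intro w hw
    by_contra hw0
    have hpos := hF.posdef u hu w hw0
    have : A w w = fundTensor F u w w := fderiv_legendre_apply u w w
    rw [hw] at this
    simp at this
    rw [← this] at hpos
    exact lt_irrefl 0 hpos
  intro a b hab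
  have := h0 (a - b) (by rw [map_sub, hab, sub_self])
  exact sub_eq_zero.mp this

end MN

/-- for a `C^{k+1}` (`k ≥ 2`) strongly convex Minkowski norm `F`, the dual
co-Finsler norm `F^*` is of class `C^k` away from the origin of the dual space. -/
theorem dualNorm_contDiffOn
    {m : ℕ} (hm : 2 ≤ m) (k : ℕ) (hk : 2 ≤ k)
    (F : EuclideanSpace ℝ (Fin m) → ℝ) (hF : IsMinkowskiNorm F)
    (hsm : ContDiffOn ℝ (k + 1 : ℕ) F ({0}ᶜ : Set (EuclideanSpace ℝ (Fin m)))) :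
    ContDiffOn ℝ (k : ℕ) (dualNorm F)
      ({0}ᶜ : Set (EuclideanSpace ℝ (Fin m) →L[ℝ] ℝ)) := by
  intro ω hω
  have hω0 : ω ≠ 0 := hω
  obtain ⟨u, hu, hℓu⟩ := MN.surj (by omega) hF hω0
  have hfr : Module.finrank ℝ (EuclideanSpace ℝ (Fin m)) =
      Module.finrank ℝ (EuclideanSpace ℝ (Fin m) →L[ℝ] ℝ) := by
    rw [finrank_euclideanSpace_fin,
      ← LinearEquiv.finrank_eq (LinearMap.toContinuousLinearMap (𝕜 := ℝ)
        (E := EuclideanSpace ℝ (Fin m)) (F' := ℝ)),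
      Module.finrank_linearMap, finrank_euclideanSpace_fin, Module.finrank_self, mul_one]
  set A : EuclideanSpace ℝ (Fin m) →L[ℝ] (EuclideanSpace ℝ (Fin m) →L[ℝ] ℝ) :=
    (1 / 2 : ℝ) • fderiv ℝ (fderiv ℝ fun y => F y ^ 2) u with hA
  have hinj : Function.Injective A := MN.injective_fderiv_legendre hF hu
  set e : EuclideanSpace ℝ (Fin m) ≃L[ℝ] (EuclideanSpace ℝ (Fin m) →L[ℝ] ℝ) :=
    ((A : EuclideanSpace ℝ (Fin m) →ₗ[ℝ] (EuclideanSpace ℝ (Fin m) →L[ℝ] ℝ)).linearEquivOfInjective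
      hinj hfr).toContinuousLinearEquiv with he
  have hcoe : (e : EuclideanSpace ℝ (Fin m) →L[ℝ] (EuclideanSpace ℝ (Fin m) →L[ℝ] ℝ)) = A := by
    refine ContinuousLinearMap.ext fun w => ?_
    show e w = A w
    rw [he, LinearEquiv.coe_toContinuousLinearEquiv']
    simp
  have hcd : ContDiffAt ℝ (k : ℕ) (legendre F) u :=
    (MN.legendre_contDiffOn hsm).contDiffAt (isOpen_compl_singleton.mem_nhds hu)
  have hfd : HasFDerivAt (legendre F)
      ((e : EuclideanSpace ℝ (Fin m) →L[ℝ] (EuclideanSpace ℝ (Fin m) →L[ℝ] ℝ))) u := by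
    rw [hcoe, hA]
    exact MN.hasFDerivAt_legendre hF hu
  have hn1 : ((k : ℕ) : WithTop ℕ∞) ≠ 0 := by exact_mod_cast (by omega : k ≠ 0)
  have hgc : ContDiffAt ℝ (k : ℕ) (hcd.localInverse hfd hn1) (legendre F u) :=
    hcd.to_localInverse hfd hn1
  have hgu : hcd.localInverse hfd hn1 (legendre F u) = u :=
    hcd.localInverse_apply_image hfd hn1
  have hstrict : HasStrictFDerivAt (legendre F)
      ((e : EuclideanSpace ℝ (Fin m) →L[ℝ] (EuclideanSpace ℝ (Fin m) →L[ℝ] ℝ))) u :=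
    hcd.hasStrictFDerivAt' hfd hn1
  have hright : ∀ᶠ y in 𝓝 (legendre F u), legendre F (hcd.localInverse hfd hn1 y) = y :=
    hstrict.eventually_right_inverse
  have hne : ∀ᶠ y in 𝓝 (legendre F u), hcd.localInverse hfd hn1 y ≠ 0 := by
    have h1 := (hgc.continuousAt).eventually_mem
      (isOpen_compl_singleton.mem_nhds (by rw [hgu]; exact hu))
    simpa using h1
  have key : dualNorm F =ᶠ[𝓝 (legendre F u)] fun y => F (hcd.localInverse hfd hn1 y) := by
    filter_upwards [hright, hne] with y h1 h2
    conv_lhs => rw [← h1]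
    exact MN.dualNorm_legendre hF h2
  have hFat : ContDiffAt ℝ (k : ℕ) F u :=
    (hsm.of_le (by exact_mod_cast Nat.le_succ k)).contDiffAt
      (isOpen_compl_singleton.mem_nhds hu)
  have hFat' : ContDiffAt ℝ (k : ℕ) F (hcd.localInverse hfd hn1 (legendre F u)) := by
    rw [hgu]; exact hFat
  have hcomp : ContDiffAt ℝ (k : ℕ) (fun y => F (hcd.localInverse hfd hn1 y))
      (legendre F u) := hFat'.comp (legendre F u) hgc
  have hfinal : ContDiffAt ℝ (k : ℕ) (dualNorm F) (legendre F u) :=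
    hcomp.congr_of_eventuallyEq key
  rw [hℓu] at hfinal
  exact hfinal.contDiffWithinAt
end
end

section
/- (Averaged Riemannian metric, pointwise version.) Let m ≥ 2 and let F be a strongly convex Minkowski norm on ℝ^m, with fundamental tensor g. Let S := { y ∈ ℝ^m : F(y) = 1 } be the indicatrix and let λ denote the (m−1)-dimensional Hausdorff measure on ℝ^m restricted to S. Then 0 < λ(S) < ∞, for all u, v ∈ ℝ^m the function y ↦ g_y(u, v) is λ-integrable on S, and h(u, v) := ( ∫_S g_y(u, v) dλ(y) ) / λ(S) defines a symmetric positive definite bilinear form (an inner product) on ℝ^m. -/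
open scoped Topology Classical
open MeasureTheory
noncomputable section

section AuxiliaryLemmas

open Set Metric

/-- coordinate bound in Euclidean space -/
lemma eucl_abs_coord_le_norm {k : ℕ} (x : EuclideanSpace ℝ (Fin k)) (i : Fin k) :
    |x i| ≤ ‖x‖ := by
  rw [EuclideanSpace.norm_eq]
  have h1 : |x i| = Real.sqrt (‖x i‖ ^ 2) := by
    rw [Real.sqrt_sq_eq_abs, Real.norm_eq_abs, abs_abs]
  rw [h1]
  exact Real.sqrt_le_sqrt
    (Finset.single_le_sum (fun j _ => sq_nonneg ‖x j‖) (Finset.mem_univ i))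

/-- comparison with the Euclidean norm -/
lemma minkowski_bounds {n : ℕ} (F : EuclideanSpace ℝ (Fin (n + 1)) → ℝ)
    (hF : IsMinkowskiNorm F) :
    ∃ a b : ℝ, 0 < a ∧ 0 < b ∧ (∀ v, a * ‖v‖ ≤ F v) ∧ (∀ v, F v ≤ b * ‖v‖) := by
  have hsph : (sphere (0 : EuclideanSpace ℝ (Fin (n + 1))) 1).Nonempty :=
    NormedSpace.sphere_nonempty.2 zero_le_one
  obtain ⟨va, hva, hamin⟩ :=
    (isCompact_sphere (0 : EuclideanSpace ℝ (Fin (n + 1))) 1).exists_isMinOn hsph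
      hF.continuous.continuousOn
  obtain ⟨vb, hvb, hbmax⟩ :=
    (isCompact_sphere (0 : EuclideanSpace ℝ (Fin (n + 1))) 1).exists_isMaxOn hsph
      hF.continuous.continuousOn
  have hva0 : va ≠ 0 := by
    intro hzero
    rw [mem_sphere_zero_iff_norm, hzero] at hva
    simp at hva
  have ha : 0 < F va := hF.pos va hva0
  have hb : 0 < F vb := lt_of_lt_of_le ha (hbmax hva)
  have key : ∀ v : EuclideanSpace ℝ (Fin (n + 1)),
      F va * ‖v‖ ≤ F v ∧ F v ≤ F vb * ‖v‖ := by
    intro v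
    rcases eq_or_ne v 0 with rfl | hv
    · simp [hF.map_zero]
    · have hc : (0 : ℝ) < ‖v‖ := norm_pos_iff.2 hv
      set u : EuclideanSpace ℝ (Fin (n + 1)) := ‖v‖⁻¹ • v with hu_def
      have hu : u ∈ sphere (0 : EuclideanSpace ℝ (Fin (n + 1))) 1 := by
        rw [mem_sphere_zero_iff_norm]
        exact norm_smul_inv_norm hv
      have hFv : F v = ‖v‖ * F u := by
        have hvu : (‖v‖ : ℝ) • u = v := smul_inv_smul₀ hc.ne' v
        conv_lhs => rw [← hvu]
        rw [hF.homog ‖v‖ hc u]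
      constructor
      · rw [hFv, mul_comm (F va)]
        exact mul_le_mul_of_nonneg_left (hamin hu) hc.le
      · rw [hFv, mul_comm (F vb)]
        exact mul_le_mul_of_nonneg_left (hbmax hu) hc.le
  exact ⟨F va, F vb, ha, hb, fun v => (key v).1, fun v => (key v).2⟩

/-- C¹ on an open set + compact convex subset gives Lipschitz. -/
lemma exists_lipschitzOnWith_of_contDiffOn
    {E G : Type*} [NormedAddCommGroup E] [NormedSpace ℝ E]
    [NormedAddCommGroup G] [NormedSpace ℝ G] {f : E → G} {U s : Set E}
    (hU : IsOpen U) (hf : ContDiffOn ℝ 1 f U) (hsU : s ⊆ U) (hconv : Convex ℝ s)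
    (hcomp : IsCompact s) : ∃ K : NNReal, LipschitzOnWith K f s := by
  have hdiff : ∀ x ∈ s, DifferentiableAt ℝ f x := fun x hx =>
    (hf.differentiableOn one_ne_zero).differentiableAt (hU.mem_nhds (hsU hx))
  have hcont : ContinuousOn (fun x => fderiv ℝ f x) s :=
    (hf.continuousOn_fderiv_of_isOpen hU le_rfl).mono hsU
  obtain ⟨C, hC⟩ := hcomp.exists_bound_of_continuousOn hcont
  refine ⟨⟨max C 0, le_max_right _ _⟩,
    hconv.lipschitzOnWith_of_nnnorm_fderiv_le hdiff fun x hx => ?_⟩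
  refine NNReal.coe_le_coe.1 (?_ : ((‖fderiv ℝ f x‖₊ : NNReal) : ℝ) ≤ ((⟨max C 0, le_max_right _ _⟩ : NNReal) : ℝ))
  simp only [coe_nnnorm, NNReal.coe_mk]
  exact (hC x hx).trans (le_max_left _ _)

/-- The indicatrix has finite `n`-dimensional Hausdorff measure. -/
lemma measure_indicatrix_lt_top {n : ℕ} (F : EuclideanSpace ℝ (Fin (n + 1)) → ℝ)
    (hF : IsMinkowskiNorm F) :
    μH[(n : ℝ)] {y : EuclideanSpace ℝ (Fin (n + 1)) | F y = 1} < ⊤ := by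
  classical
  have hX : True := trivial
  let e := WithLp.equiv 2 (Fin (n + 1) → ℝ)
  set φ : EuclideanSpace ℝ (Fin (n + 1)) → EuclideanSpace ℝ (Fin (n + 1)) := fun v => (F v)⁻¹ • v with hφdef
  have hφsm : ContDiffOn ℝ 1 φ ({0}ᶜ : Set (EuclideanSpace ℝ (Fin (n + 1)))) := by
    have h := ((hF.smooth.of_le one_le_two).inv fun x hx =>
      (hF.pos x (Set.mem_compl_singleton_iff.1 hx)).ne').smul contDiffOn_id
    exact h
  -- faces of the unit cube
  let face : Fin (n + 1) → ℝ → Set (Fin (n + 1) → ℝ) := fun i ε =>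
    {x | x i = ε} ∩ Metric.closedBall 0 1
  let faceX : Fin (n + 1) → ℝ → Set (EuclideanSpace ℝ (Fin (n + 1))) := fun i ε => e.symm '' face i ε
  -- the equiv and its Lipschitz properties
  have heL : LipschitzWith 1 (e : EuclideanSpace ℝ (Fin (n + 1)) → (Fin (n + 1) → ℝ)) :=
    PiLp.lipschitzWith_ofLp 2 _
  have heA := PiLp.antilipschitzWith_ofLp 2 (fun _ : Fin (n + 1) => ℝ)
  have heSymmL : LipschitzWith _ (e.symm : (Fin (n + 1) → ℝ) → EuclideanSpace ℝ (Fin (n + 1))) :=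
    heA.to_rightInverse e.right_inv
  have hn0 : (0 : ℝ) ≤ (n : ℝ) := Nat.cast_nonneg n
  -- Hausdorff measure equals volume on (Fin n → ℝ)
  have hQvol : (μH[(n : ℝ)] : Measure (Fin n → ℝ)) = volume := by
    simpa using MeasureTheory.hausdorffMeasure_pi_real (ι := Fin n)
  -- each face has finite measure in the sup-metric space
  have hface_pi : ∀ (i : Fin (n + 1)) (ε : ℝ), μH[(n : ℝ)] (face i ε) < ⊤ := by
    intro i ε
    have hins : LipschitzWith 1 (fun y : Fin n → ℝ => i.insertNth (α := fun _ => ℝ) ε y) := by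
      refine LipschitzWith.of_dist_le_mul fun x y => ?_
      rw [NNReal.coe_one, one_mul]
      refine (dist_pi_le_iff dist_nonneg).2 fun j => ?_
      refine Fin.succAboveCases i ?_ ?_ j
      · simpa using dist_nonneg (x := x) (y := y)
      · intro k
        simp only [Fin.insertNth_apply_succAbove]
        exact dist_le_pi_dist x y k
    have hsub : face i ε ⊆ (fun y : Fin n → ℝ => i.insertNth (α := fun _ => ℝ) ε y) '' Metric.closedBall 0 1 := by
      rintro x ⟨hxi, hxball⟩
      have hxnorm : ‖x‖ ≤ 1 := by rwa [Metric.mem_closedBall, dist_zero_right] at hxball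
      refine ⟨i.removeNth (α := fun _ => ℝ) x, ?_, ?_⟩
      · rw [Metric.mem_closedBall, dist_zero_right]
        refine (pi_norm_le_iff_of_nonneg zero_le_one).2 fun j => ?_
        exact (norm_le_pi_norm x (i.succAbove j)).trans hxnorm
      · have : x i = ε := hxi
        rw [← this]
        exact Fin.insertNth_self_removeNth (α := fun _ => ℝ) i x
    calc μH[(n : ℝ)] (face i ε) ≤
        μH[(n : ℝ)] ((fun y : Fin n → ℝ => i.insertNth (α := fun _ => ℝ) ε y) '' Metric.closedBall 0 1) :=
          measure_mono hsub
      _ ≤ (1 : NNReal) ^ (n : ℝ) * μH[(n : ℝ)] (Metric.closedBall (0 : Fin n → ℝ) 1) :=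
          hins.hausdorffMeasure_image_le hn0 _
      _ < ⊤ := by
          rw [hQvol]
          simp only [ENNReal.coe_one, ENNReal.one_rpow, one_mul]
          exact measure_closedBall_lt_top
  -- faces in X
  have hfaceX_lt : ∀ (i : Fin (n + 1)) (ε : ℝ), μH[(n : ℝ)] (faceX i ε) < ⊤ := by
    intro i ε
    calc μH[(n : ℝ)] (e.symm '' face i ε)
        ≤ _ * μH[(n : ℝ)] (face i ε) := heSymmL.hausdorffMeasure_image_le hn0 _
      _ < ⊤ := ENNReal.mul_lt_top
          (ENNReal.rpow_lt_top_of_nonneg hn0 ENNReal.coe_ne_top) (hface_pi i ε)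
  -- each face avoids 0, is convex and compact
  have hfaceX_sub : ∀ (i : Fin (n + 1)) (ε : ℝ), ε ≠ 0 → faceX i ε ⊆ ({0}ᶜ : Set (EuclideanSpace ℝ (Fin (n + 1)))) := by
    rintro i ε hε v ⟨x, ⟨hxi, -⟩, rfl⟩
    intro hv
    rw [Set.mem_singleton_iff] at hv
    have hx0 : x = 0 := by
      have := congrArg e hv
      rwa [Equiv.apply_symm_apply, show e 0 = 0 from rfl] at this
    rw [hx0] at hxi
    exact hε hxi.symm
  have hfaceX_conv : ∀ (i : Fin (n + 1)) (ε : ℝ), Convex ℝ (faceX i ε) := by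
    intro i ε
    have h1 : Convex ℝ (face i ε) := by
      refine Convex.inter ?_ (convex_closedBall 0 1)
      have : ({x : Fin (n + 1) → ℝ | x i = ε}) =
          (LinearMap.proj i : (Fin (n + 1) → ℝ) →ₗ[ℝ] ℝ) ⁻¹' {ε} := rfl
      rw [this]
      exact (convex_singleton ε).linear_preimage _
    exact h1.linear_image (WithLp.linearEquiv 2 ℝ (Fin (n + 1) → ℝ)).symm.toLinearMap
  have hfaceX_comp : ∀ (i : Fin (n + 1)) (ε : ℝ), IsCompact (faceX i ε) := by
    intro i ε
    have h1 : IsCompact (face i ε) := by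
      refine (isCompact_closedBall 0 1).inter_left ?_
      exact isClosed_singleton.preimage (continuous_apply i)
    exact h1.image heSymmL.continuous
  -- pieces have finite measure
  have hpiece : ∀ (i : Fin (n + 1)) (ε : ℝ), ε ≠ 0 → μH[(n : ℝ)] (φ '' faceX i ε) < ⊤ := by
    intro i ε hε
    obtain ⟨K, hK⟩ := exists_lipschitzOnWith_of_contDiffOn isOpen_compl_singleton hφsm
      (hfaceX_sub i ε hε) (hfaceX_conv i ε) (hfaceX_comp i ε)
    calc μH[(n : ℝ)] (φ '' faceX i ε) ≤ (K : ENNReal) ^ (n : ℝ) * μH[(n : ℝ)] (faceX i ε) :=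
        hK.hausdorffMeasure_image_le hn0
      _ < ⊤ := ENNReal.mul_lt_top
          (ENNReal.rpow_lt_top_of_nonneg hn0 ENNReal.coe_ne_top) (hfaceX_lt i ε)
  -- covering of the indicatrix
  have hcover : {y : EuclideanSpace ℝ (Fin (n + 1)) | F y = 1} ⊆
      ⋃ i : Fin (n + 1), (φ '' faceX i 1 ∪ φ '' faceX i (-1)) := by
    intro y hy
    have hFy : F y = 1 := hy
    have hy0 : y ≠ 0 := by
      intro h; rw [h, hF.map_zero] at hFy; norm_num at hFy
    set x : Fin (n + 1) → ℝ := e y with hx_def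
    have hx0 : x ≠ 0 := by
      intro h
      apply hy0
      have := congrArg e.symm h
      rwa [Equiv.symm_apply_apply, show e.symm 0 = 0 from rfl] at this
    have hs : (0 : ℝ) < ‖x‖ := norm_pos_iff.2 hx0
    set x' : Fin (n + 1) → ℝ := ‖x‖⁻¹ • x with hx'_def
    have hx'norm : ‖x'‖ = 1 := norm_smul_inv_norm hx0
    -- find a coordinate where the sup norm is attained
    obtain ⟨i, -, hi⟩ := Finset.exists_mem_eq_sup (Finset.univ : Finset (Fin (n + 1)))
      Finset.univ_nonempty (fun j => ‖x' j‖₊)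
    have hxi : ‖x' i‖ = 1 := by
      have h1 : ‖x'‖₊ = ‖x' i‖₊ := by rw [Pi.nnnorm_def]; exact hi
      have := congrArg (fun t : NNReal => (t : ℝ)) h1
      simpa [hx'norm] using this.symm
    have hx'mem : x' ∈ face i (x' i) := by
      refine ⟨rfl, ?_⟩
      rw [Metric.mem_closedBall, dist_zero_right, hx'norm]
    have hεcases : x' i = 1 ∨ x' i = -1 := by
      rcases abs_eq (zero_le_one (α := ℝ)) |>.1 (by rwa [← Real.norm_eq_abs]) with h | h
      · exact Or.inl h
      · exact Or.inr h
    have hφv : φ (e.symm x') = y := by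
      have hv_eq : e.symm x' = ‖x‖⁻¹ • y := by
        rw [hx'_def, show e.symm (‖x‖⁻¹ • x) = ‖x‖⁻¹ • e.symm x from rfl, hx_def, Equiv.symm_apply_apply]
      have hFv : F (e.symm x') = ‖x‖⁻¹ := by
        rw [hv_eq, hF.homog _ (inv_pos.2 hs) y, hFy, mul_one]
      show (F (e.symm x'))⁻¹ • (e.symm x') = y
      rw [hFv, hv_eq, inv_inv, smul_smul, mul_inv_cancel₀ hs.ne', one_smul]
    refine Set.mem_iUnion.2 ⟨i, ?_⟩
    rcases hεcases with h | h
    · exact Or.inl ⟨e.symm x', ⟨x', h ▸ hx'mem, rfl⟩, hφv⟩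
    · exact Or.inr ⟨e.symm x', ⟨x', h ▸ hx'mem, rfl⟩, hφv⟩
  calc μH[(n : ℝ)] {y : EuclideanSpace ℝ (Fin (n + 1)) | F y = 1}
      ≤ μH[(n : ℝ)] (⋃ i : Fin (n + 1), (φ '' faceX i 1 ∪ φ '' faceX i (-1))) :=
        measure_mono hcover
    _ ≤ ∑' i : Fin (n + 1), μH[(n : ℝ)] (φ '' faceX i 1 ∪ φ '' faceX i (-1)) :=
        measure_iUnion_le _
    _ < ⊤ := by
        rw [tsum_fintype]
        refine ENNReal.sum_lt_top.2 fun i _ => ?_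
        exact (measure_union_le _ _).trans_lt
          (ENNReal.add_lt_top.2 ⟨hpiece i 1 one_ne_zero, hpiece i (-1) (by norm_num)⟩)

/-- The indicatrix has positive `n`-dimensional Hausdorff measure. -/
lemma measure_indicatrix_pos {n : ℕ} (F : EuclideanSpace ℝ (Fin (n + 1)) → ℝ)
    (hF : IsMinkowskiNorm F) :
    0 < μH[(n : ℝ)] {y : EuclideanSpace ℝ (Fin (n + 1)) | F y = 1} := by
  classical
  obtain ⟨a, b, ha, hb, hav, hbv⟩ := minkowski_bounds F hF
  let eX := WithLp.equiv 2 (Fin (n + 1) → ℝ)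
  let eY := WithLp.equiv 2 (Fin n → ℝ)
  set S : Set (EuclideanSpace ℝ (Fin (n + 1))) := {y | F y = 1} with hS_def
  -- the projection to the first n coordinates
  set π : EuclideanSpace ℝ (Fin (n + 1)) → EuclideanSpace ℝ (Fin n) :=
    fun v => eY.symm (fun i => eX v i.castSucc) with hπ_def
  have hπL : LipschitzWith 1 π := by
    refine LipschitzWith.of_dist_le_mul fun v w => ?_
    rw [NNReal.coe_one, one_mul, EuclideanSpace.dist_eq, EuclideanSpace.dist_eq]
    apply Real.sqrt_le_sqrt
    rw [Fin.sum_univ_castSucc (f := fun i : Fin (n + 1) => dist (v i) (w i) ^ 2)]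
    have hco : ∀ i : Fin n, dist (π v i) (π w i) ^ 2 = dist (v i.castSucc) (w i.castSucc) ^ 2 := by
      intro i
      rfl
    rw [Finset.sum_congr rfl fun i _ => hco i]
    exact le_add_of_nonneg_right (sq_nonneg _)
  have hn0 : (0 : ℝ) ≤ (n : ℝ) := Nat.cast_nonneg n
  -- the radial extension map
  set j : EuclideanSpace ℝ (Fin n) → ℝ → EuclideanSpace ℝ (Fin (n + 1)) :=
    fun z t => eX.symm (Fin.snoc (eY z) t) with hj_def
  have hjcoord : ∀ (z : EuclideanSpace ℝ (Fin n)) (t : ℝ) (k : Fin (n + 1)),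
      j z t k = (Fin.snoc (eY z) t : Fin (n + 1) → ℝ) k := fun z t k => rfl
  have hjnorm0 : ∀ z : EuclideanSpace ℝ (Fin n), ‖j z 0‖ = ‖z‖ := by
    intro z
    rw [EuclideanSpace.norm_eq, EuclideanSpace.norm_eq]
    congr 1
    rw [Fin.sum_univ_castSucc (f := fun k : Fin (n + 1) => ‖j z 0 k‖ ^ 2)]
    have h1 : ∀ i : Fin n, ‖j z 0 i.castSucc‖ ^ 2 = ‖z i‖ ^ 2 := by
      intro i; rw [hjcoord]; rw [Fin.snoc_castSucc]; rfl
    have h2 : ‖j z 0 (Fin.last n)‖ ^ 2 = 0 := by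
      rw [hjcoord]; simp [Fin.snoc_last]
    rw [Finset.sum_congr rfl fun i _ => h1 i, h2, add_zero]
  have hjlast : ∀ (z : EuclideanSpace ℝ (Fin n)) (t : ℝ), |t| ≤ ‖j z t‖ := by
    intro z t
    have := eucl_abs_coord_le_norm (j z t) (Fin.last n)
    rwa [hjcoord, Fin.snoc_last] at this
  -- the ball of radius r is contained in the projection of S
  set r : ℝ := (2 * b)⁻¹ with hr_def
  have hr : 0 < r := by positivity
  have hsubS : Metric.ball (0 : EuclideanSpace ℝ (Fin n)) r ⊆ π '' S := by
    intro z hz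
    rw [Metric.mem_ball, dist_zero_right] at hz
    set g : ℝ → ℝ := fun t => F (j z t) with hg_def
    have hjz_cont : Continuous fun t : ℝ => j z t := by
      have h1 : Continuous fun t : ℝ => (Fin.snoc (eY z) t : Fin (n + 1) → ℝ) := by
        refine continuous_pi fun k => ?_
        refine Fin.lastCases ?_ ?_ k
        · simpa [Fin.snoc_last] using continuous_id'
        · intro i; simpa [Fin.snoc_castSucc] using continuous_const
      have h2 : Continuous (eX.symm : (Fin (n + 1) → ℝ) → EuclideanSpace ℝ (Fin (n + 1))) :=
        ((PiLp.antilipschitzWith_ofLp 2 _).to_rightInverse eX.right_inv).continuous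
      exact h2.comp h1
    have hgc : Continuous g := hF.continuous.comp hjz_cont
    have hg0 : g 0 < 1 := by
      have h1 : g 0 ≤ b * ‖z‖ := by
        have h := hbv (j z 0)
        rwa [hjnorm0] at h
      have hbr : b * r = 2⁻¹ := by
        rw [hr_def]
        field_simp
      have h2 : b * ‖z‖ < b * r := mul_lt_mul_of_pos_left hz hb
      linarith
    set T : ℝ := 2 / a with hT_def
    have hT0 : 0 ≤ T := by positivity
    have hgT : 1 ≤ g T := by
      have h1 : a * T ≤ a * ‖j z T‖ := by
        refine mul_le_mul_of_nonneg_left ?_ ha.le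
        calc T = |T| := (abs_of_nonneg hT0).symm
          _ ≤ ‖j z T‖ := hjlast z T
      have h2 : a * T = 2 := by
        rw [hT_def, mul_div_cancel₀ _ ha.ne']
      have h3 : a * ‖j z T‖ ≤ F (j z T) := hav _
      calc (1 : ℝ) ≤ 2 := one_le_two
        _ = a * T := h2.symm
        _ ≤ a * ‖j z T‖ := h1
        _ ≤ g T := h3
    obtain ⟨t, -, hgt⟩ := intermediate_value_Icc hT0 hgc.continuousOn ⟨hg0.le, hgT⟩
    refine ⟨j z t, hgt, ?_⟩
    show eY.symm (fun i => eX (j z t) i.castSucc) = z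
    have : (fun i : Fin n => eX (j z t) i.castSucc) = eY z := by
      funext i
      show (Fin.snoc (eY z) t : Fin (n + 1) → ℝ) i.castSucc = eY z i
      simp [Fin.snoc_castSucc]
    rw [this, Equiv.symm_apply_apply]
  -- lower bound via the pi-type volume
  have hQvol : (μH[(n : ℝ)] : Measure (Fin n → ℝ)) = volume := by
    simpa using MeasureTheory.hausdorffMeasure_pi_real (ι := Fin n)
  set c : NNReal := (Fintype.card (Fin n) : NNReal) ^ ((1 : ENNReal) / 2).toReal with hc_def
  set r' : ℝ := r / ((c : ℝ) + 1) with hr'_def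
  have hc1 : (0 : ℝ) < (c : ℝ) + 1 := by positivity
  have hr' : 0 < r' := by positivity
  have hballsub : Metric.ball (0 : Fin n → ℝ) r' ⊆
      (eY : EuclideanSpace ℝ (Fin n) → (Fin n → ℝ)) '' Metric.ball (0 : EuclideanSpace ℝ (Fin n)) r := by
    intro x hx
    rw [Metric.mem_ball, dist_zero_right] at hx
    refine ⟨eY.symm x, ?_, Equiv.apply_symm_apply _ _⟩
    rw [Metric.mem_ball, dist_zero_right]
    have hanti := (PiLp.antilipschitzWith_ofLp 2 (fun _ : Fin n => ℝ)).le_mul_dist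
      (eY.symm x) 0
    rw [WithLp.ofLp_zero] at hanti
    change _ ≤ _ * dist x 0 at hanti
    rw [dist_zero_right, dist_zero_right] at hanti
    calc ‖eY.symm x‖ ≤ (c : ℝ) * ‖x‖ := hanti
      _ ≤ ((c : ℝ) + 1) * ‖x‖ := by nlinarith [norm_nonneg x]
      _ < ((c : ℝ) + 1) * r' := by exact mul_lt_mul_of_pos_left hx hc1
      _ = r := by rw [hr'_def]; field_simp
  have h0 : (0 : ENNReal) < volume (Metric.ball (0 : Fin n → ℝ) r') :=
    Metric.measure_ball_pos volume 0 hr'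
  calc (0 : ENNReal) < volume (Metric.ball (0 : Fin n → ℝ) r') := h0
    _ = μH[(n : ℝ)] (Metric.ball (0 : Fin n → ℝ) r') := by rw [hQvol]
    _ ≤ μH[(n : ℝ)] ((eY : EuclideanSpace ℝ (Fin n) → (Fin n → ℝ)) ''
        Metric.ball (0 : EuclideanSpace ℝ (Fin n)) r) := measure_mono hballsub
    _ ≤ (1 : NNReal) ^ (n : ℝ) * μH[(n : ℝ)] (Metric.ball (0 : EuclideanSpace ℝ (Fin n)) r) :=
        (PiLp.lipschitzWith_ofLp 2 _).hausdorffMeasure_image_le hn0 _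
    _ = μH[(n : ℝ)] (Metric.ball (0 : EuclideanSpace ℝ (Fin n)) r) := by
        simp
    _ ≤ μH[(n : ℝ)] (π '' S) := measure_mono hsubS
    _ ≤ (1 : NNReal) ^ (n : ℝ) * μH[(n : ℝ)] S := hπL.hausdorffMeasure_image_le hn0 _
    _ = μH[(n : ℝ)] S := by simp

end AuxiliaryLemmas

section Main

open Set Metric

/-- averaged Riemannian metric, pointwise version: averaging the
fundamental tensor of a strongly convex Minkowski norm over its indicatrix, with respect
to the `(m-1)`-dimensional Hausdorff measure, yields an inner product on `ℝ^m`. -/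
theorem averaged_metric_inner_product
    {m : ℕ} (hm : 2 ≤ m) (F : EuclideanSpace ℝ (Fin m) → ℝ)
    (hF : IsMinkowskiNorm F) :
    let S : Set (EuclideanSpace ℝ (Fin m)) := {y | F y = 1}
    let lam : Measure (EuclideanSpace ℝ (Fin m)) := μH[(m : ℝ) - 1]
    let h : EuclideanSpace ℝ (Fin m) → EuclideanSpace ℝ (Fin m) → ℝ :=
      fun u v => (∫ y in S, fundTensor F y u v ∂lam) / (lam S).toReal
    0 < lam S ∧ lam S < ⊤ ∧
    (∀ u v : EuclideanSpace ℝ (Fin m),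
        IntegrableOn (fun y => fundTensor F y u v) S lam) ∧
    (∀ u v, h u v = h v u) ∧
    (∀ v, IsLinearMap ℝ (fun u => h u v)) ∧
    (∀ u, IsLinearMap ℝ (fun v => h u v)) ∧
    (∀ u : EuclideanSpace ℝ (Fin m), u ≠ 0 → 0 < h u u) := by
  obtain ⟨n, rfl⟩ : ∃ n, m = n + 1 := ⟨m - 1, by omega⟩
  intro S lam h
  have hexp : ((n + 1 : ℕ) : ℝ) - 1 = (n : ℝ) := by push_cast; ring
  have hlam : lam = (μH[(n : ℝ)] : Measure (EuclideanSpace ℝ (Fin (n + 1)))) := by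
    show (μH[((n + 1 : ℕ) : ℝ) - 1] : Measure (EuclideanSpace ℝ (Fin (n + 1)))) = _
    rw [hexp]
  have hpos : 0 < lam S := by rw [hlam]; exact measure_indicatrix_pos F hF
  have hfin : lam S < ⊤ := by rw [hlam]; exact measure_indicatrix_lt_top F hF
  have hS0 : ∀ y ∈ S, y ≠ (0 : EuclideanSpace ℝ (Fin (n + 1))) := by
    intro y hy h0
    have hy1 : F y = 1 := hy
    rw [h0, hF.map_zero] at hy1
    norm_num at hy1
  have hSsub : S ⊆ ({0}ᶜ : Set (EuclideanSpace ℝ (Fin (n + 1)))) := fun y hy => hS0 y hy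
  have hSclosed : IsClosed S := by
    have hSeq : S = F ⁻¹' {1} := rfl
    rw [hSeq]
    exact isClosed_singleton.preimage hF.continuous
  have hSmeas : MeasurableSet S := hSclosed.measurableSet
  obtain ⟨a, b, ha, hb, hav, hbv⟩ := minkowski_bounds F hF
  have hSbound : S ⊆ Metric.closedBall 0 a⁻¹ := by
    intro y hy
    rw [Metric.mem_closedBall, dist_zero_right]
    have h2 : a * ‖y‖ ≤ 1 := by
      have h3 := hav y
      rw [show F y = 1 from hy] at h3
      exact h3
    calc ‖y‖ = a⁻¹ * (a * ‖y‖) := by field_simp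
      _ ≤ a⁻¹ * 1 := mul_le_mul_of_nonneg_left h2 (inv_nonneg.2 ha.le)
      _ = a⁻¹ := mul_one _
  have hScomp : IsCompact S :=
    (isCompact_closedBall (0 : EuclideanSpace ℝ (Fin (n + 1))) a⁻¹).of_isClosed_subset
      hSclosed hSbound
  -- continuity of the fundamental tensor
  have hG : ContDiffOn ℝ 2 (fun u : EuclideanSpace ℝ (Fin (n + 1)) => (F u) ^ 2) {0}ᶜ :=
    hF.smooth.pow 2
  have h1 : ContDiffOn ℝ 1
      (fderiv ℝ (fun u : EuclideanSpace ℝ (Fin (n + 1)) => (F u) ^ 2)) {0}ᶜ :=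
    hG.fderiv_of_isOpen isOpen_compl_singleton (by norm_num)
  have h2 : ContinuousOn
      (fderiv ℝ (fderiv ℝ (fun u : EuclideanSpace ℝ (Fin (n + 1)) => (F u) ^ 2))) {0}ᶜ :=
    h1.continuousOn_fderiv_of_isOpen isOpen_compl_singleton le_rfl
  have hTcont : ∀ u v : EuclideanSpace ℝ (Fin (n + 1)),
      ContinuousOn (fun y => fundTensor F y u v) S := by
    intro u v
    have hcc : ContinuousOn (fun y : EuclideanSpace ℝ (Fin (n + 1)) =>
        fderiv ℝ (fderiv ℝ (fun u : EuclideanSpace ℝ (Fin (n + 1)) => (F u) ^ 2)) y u v)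
        {0}ᶜ :=
      (h2.clm_apply continuousOn_const).clm_apply continuousOn_const
    exact (continuousOn_const.mul (hcc.mono hSsub))
  haveI hfinm : IsFiniteMeasure (lam.restrict S) :=
    ⟨by rwa [Measure.restrict_apply_univ]⟩
  have hint : ∀ u v : EuclideanSpace ℝ (Fin (n + 1)),
      IntegrableOn (fun y => fundTensor F y u v) S lam := by
    intro u v
    obtain ⟨C, hC⟩ := hScomp.exists_bound_of_continuousOn (hTcont u v)
    refine ⟨(hTcont u v).aestronglyMeasurable hSmeas, ?_⟩
    refine HasFiniteIntegral.of_bounded (C := C) ?_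
    exact (ae_restrict_iff' hSmeas).2 (Filter.Eventually.of_forall fun x => hC x)
  have htR : 0 < (lam S).toReal := ENNReal.toReal_pos hpos.ne' hfin.ne
  refine ⟨hpos, hfin, hint, ?_, ?_, ?_, ?_⟩
  · -- symmetry
    intro u v
    show (∫ y in S, fundTensor F y u v ∂lam) / (lam S).toReal
      = (∫ y in S, fundTensor F y v u ∂lam) / (lam S).toReal
    congr 1
    exact setIntegral_congr_fun hSmeas fun y hy => hF.symm y (hS0 y hy) u v
  · -- linear in first argument
    intro v
    constructor
    · intro u₁ u₂
      show (∫ y in S, fundTensor F y (u₁ + u₂) v ∂lam) / (lam S).toReal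
        = (∫ y in S, fundTensor F y u₁ v ∂lam) / (lam S).toReal
          + (∫ y in S, fundTensor F y u₂ v ∂lam) / (lam S).toReal
      rw [← add_div]
      congr 1
      have heq : ∀ y : EuclideanSpace ℝ (Fin (n + 1)),
          fundTensor F y (u₁ + u₂) v = fundTensor F y u₁ v + fundTensor F y u₂ v := by
        intro y
        simp only [fundTensor, map_add, ContinuousLinearMap.add_apply]
        ring
      simp only [heq]
      exact integral_add (hint u₁ v) (hint u₂ v)
    · intro c u
      show (∫ y in S, fundTensor F y (c • u) v ∂lam) / (lam S).toReal
        = c • ((∫ y in S, fundTensor F y u v ∂lam) / (lam S).toReal)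
      have heq : ∀ y : EuclideanSpace ℝ (Fin (n + 1)),
          fundTensor F y (c • u) v = c * fundTensor F y u v := by
        intro y
        simp only [fundTensor, ContinuousLinearMap.map_smul, ContinuousLinearMap.smul_apply, smul_eq_mul]
        ring
      simp only [heq, smul_eq_mul]
      rw [integral_const_mul, mul_div_assoc]
  · -- linear in second argument
    intro u
    constructor
    · intro v₁ v₂
      show (∫ y in S, fundTensor F y u (v₁ + v₂) ∂lam) / (lam S).toReal
        = (∫ y in S, fundTensor F y u v₁ ∂lam) / (lam S).toReal
          + (∫ y in S, fundTensor F y u v₂ ∂lam) / (lam S).toReal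
      rw [← add_div]
      congr 1
      have heq : ∀ y : EuclideanSpace ℝ (Fin (n + 1)),
          fundTensor F y u (v₁ + v₂) = fundTensor F y u v₁ + fundTensor F y u v₂ := by
        intro y
        simp only [fundTensor, map_add]
        ring
      simp only [heq]
      exact integral_add (hint u v₁) (hint u v₂)
    · intro c v
      show (∫ y in S, fundTensor F y u (c • v) ∂lam) / (lam S).toReal
        = c • ((∫ y in S, fundTensor F y u v ∂lam) / (lam S).toReal)
      have heq : ∀ y : EuclideanSpace ℝ (Fin (n + 1)),
          fundTensor F y u (c • v) = c * fundTensor F y u v := by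
        intro y
        simp only [fundTensor, ContinuousLinearMap.map_smul, smul_eq_mul]
        ring
      simp only [heq, smul_eq_mul]
      rw [integral_const_mul, mul_div_assoc]
  · -- positive definiteness
    intro u hu
    have hSne : S.Nonempty := by
      rcases Set.eq_empty_or_nonempty S with hSe | hSe
      · rw [hSe] at hpos; simp at hpos
      · exact hSe
    obtain ⟨y₀, hy₀S, hy₀⟩ := hScomp.exists_isMinOn hSne (hTcont u u)
    have hc : 0 < fundTensor F y₀ u u := hF.posdef y₀ (hS0 y₀ hy₀S) u hu
    have hkey : fundTensor F y₀ u u * (lam S).toReal ≤ ∫ y in S, fundTensor F y u u ∂lam :=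
      setIntegral_ge_of_const_le_real hSmeas hfin.ne (fun y hy => hy₀ hy) (hint u u)
    show 0 < (∫ y in S, fundTensor F y u u ∂lam) / (lam S).toReal
    apply div_pos _ htR
    calc (0 : ℝ) < fundTensor F y₀ u u * (lam S).toReal := mul_pos hc htR
      _ ≤ _ := hkey

end Main
end
end
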